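/- arXiv:1103.4564 — 5 statements merged into one kernel-verified Lean document; each statement's English description precedes it below -/
import Mathlib

section
/- For every h ∈ (0, 1/2), the function α ↦ ρ_h(α) is strictly decreasing on the interval (0, 2h], with ρ_h(2h) = 0, and it maps (0, 2h] bijectively onto the interval [0, arctanh(2h)) (note arccosh(1/√(1 − 4h²)) = arctanh(2h)). -/
open Real Set Filter MeasureTheory

/-- Inverse hyperbolic cosine. -/
noncomputable def arcosh (x : ℝ) : ℝ := Real.log (x + Real.sqrt (x ^ 2 - 1))

/-- The root `φ(h,α)` of the quadratic `(s² − 1) − (2hs − α)²`. -/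
noncomputable def phi (h α : ℝ) : ℝ :=
  (-2 * α * h + Real.sqrt (1 - 4 * h ^ 2 + α ^ 2)) / (1 - 4 * h ^ 2)

/-- The negative root `b(h,α)` of the quadratic `(s² − 1) − (2hs − α)²`. -/
noncomputable def bb (h α : ℝ) : ℝ :=
  -(2 * h * α + Real.sqrt (1 - 4 * h ^ 2 + α ^ 2)) / (1 - 4 * h ^ 2)

/-- The radius `ρ_h(α)` of the base circle of the rotational cmc `h` surface `H_α^h`. -/
noncomputable def rho (h α : ℝ) : ℝ := _root_.arcosh (phi h α)

/-- The derivative `u_α^h` of the profile function of `H_α^h`. -/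
noncomputable def uu (h α ρ : ℝ) : ℝ :=
  (-α + 2 * h * Real.cosh ρ) /
    Real.sqrt (Real.sinh ρ ^ 2 - (-α + 2 * h * Real.cosh ρ) ^ 2)

/-- The profile function `H_α^h` of the rotational cmc `h` surfaces of Sa Earp–Toubiana. -/
noncomputable def HH (h α ρ : ℝ) : ℝ := ∫ w in rho h α..ρ, uu h α w

/-- Inverse hyperbolic tangent. -/
noncomputable def artanh (x : ℝ) : ℝ := Real.log ((1 + x) / (1 - x)) / 2

lemma arcosh_one' : _root_.arcosh 1 = 0 := by
  unfold _root_.arcosh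
  norm_num

lemma arcosh_nonneg' {x : ℝ} (hx : 1 ≤ x) : 0 ≤ _root_.arcosh x := by
  unfold _root_.arcosh
  apply Real.log_nonneg
  have := Real.sqrt_nonneg (x ^ 2 - 1)
  linarith

lemma arcosh_lt_arcosh {x y : ℝ} (hx : 1 ≤ x) (hxy : x < y) : _root_.arcosh x < _root_.arcosh y := by
  unfold _root_.arcosh
  have h1 : Real.sqrt (x ^ 2 - 1) ≤ Real.sqrt (y ^ 2 - 1) :=
    Real.sqrt_le_sqrt (by nlinarith)
  have h2 : (0 : ℝ) < x + Real.sqrt (x ^ 2 - 1) := by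
    have := Real.sqrt_nonneg (x ^ 2 - 1); linarith
  exact Real.log_lt_log h2 (by linarith)

lemma arcosh_eq_artanh {t : ℝ} (h0 : 0 < t) (h1 : t < 1) :
    _root_.arcosh (1 / Real.sqrt (1 - t ^ 2)) = _root_.artanh t := by
  have hs0 : 0 < Real.sqrt (1 - t ^ 2) := Real.sqrt_pos.2 (by nlinarith)
  have hs2 : Real.sqrt (1 - t ^ 2) ^ 2 = 1 - t ^ 2 := Real.sq_sqrt (by nlinarith)
  set s := Real.sqrt (1 - t ^ 2) with hsdef
  have hx2 : (1 / s) ^ 2 - 1 = (t / s) ^ 2 := by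
    field_simp
    nlinarith [hs2]
  unfold _root_.arcosh _root_.artanh
  rw [hx2, Real.sqrt_sq (le_of_lt (div_pos h0 hs0))]
  have hsum : 1 / s + t / s = (1 + t) / s := by ring
  rw [hsum]
  have h1t : (0 : ℝ) < 1 - t := by linarith
  have key : (1 + t) / s = Real.sqrt ((1 + t) / (1 - t)) := by
    rw [show (1 + t) / (1 - t) = ((1 + t) / s) ^ 2 by
      field_simp
      nlinarith [hs2]]
    exact (Real.sqrt_sq (by positivity)).symm
  rw [key, Real.log_sqrt (by positivity)]

lemma phi_ge_one (h : ℝ) (hh : h ∈ Set.Ioo (0 : ℝ) (1 / 2)) {a : ℝ}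
    (ha : a ∈ Set.Icc 0 (2 * h)) : 1 ≤ phi h a := by
  obtain ⟨h0, h2⟩ := hh
  have hc : (0 : ℝ) < 1 - 4 * h ^ 2 := by nlinarith
  have hs0 : 0 < Real.sqrt (1 - 4 * h ^ 2 + a ^ 2) :=
    Real.sqrt_pos.2 (by nlinarith [ha.1])
  have hs2 : Real.sqrt (1 - 4 * h ^ 2 + a ^ 2) ^ 2 = 1 - 4 * h ^ 2 + a ^ 2 :=
    Real.sq_sqrt (by nlinarith [ha.1])
  set s := Real.sqrt (1 - 4 * h ^ 2 + a ^ 2)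
  have key : 1 - 4 * h ^ 2 + 2 * a * h ≤ s := by
    have hpos : 0 < s + (1 - 4 * h ^ 2 + 2 * a * h) := by nlinarith [ha.1]
    nlinarith [hs2, mul_nonneg (le_of_lt hc) (sq_nonneg (2 * h - a)), hpos, ha.1, ha.2]
  unfold phi
  rw [le_div_iff₀ hc]
  linarith

lemma phi_strictAntiOn (h : ℝ) (hh : h ∈ Set.Ioo (0 : ℝ) (1 / 2)) :
    StrictAntiOn (phi h) (Set.Icc 0 (2 * h)) := by
  obtain ⟨h0, h2⟩ := hh
  have hc : (0 : ℝ) < 1 - 4 * h ^ 2 := by nlinarith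
  intro a ha b hb hab
  have hsa0 : 0 < Real.sqrt (1 - 4 * h ^ 2 + a ^ 2) :=
    Real.sqrt_pos.2 (by nlinarith [ha.1])
  have hsb0 : 0 < Real.sqrt (1 - 4 * h ^ 2 + b ^ 2) :=
    Real.sqrt_pos.2 (by nlinarith [hb.1])
  have hsa2 : Real.sqrt (1 - 4 * h ^ 2 + a ^ 2) ^ 2 = 1 - 4 * h ^ 2 + a ^ 2 :=
    Real.sq_sqrt (by nlinarith [ha.1])
  have hsb2 : Real.sqrt (1 - 4 * h ^ 2 + b ^ 2) ^ 2 = 1 - 4 * h ^ 2 + b ^ 2 :=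
    Real.sq_sqrt (by nlinarith [hb.1])
  set sa := Real.sqrt (1 - 4 * h ^ 2 + a ^ 2)
  set sb := Real.sqrt (1 - 4 * h ^ 2 + b ^ 2)
  have ha0 : 0 ≤ a := ha.1
  have hb2h : b ≤ 2 * h := hb.2
  have ha2h : a < 2 * h := lt_of_lt_of_le hab hb2h
  have hb0 : 0 < b := lt_of_le_of_lt ha0 hab
  have key1 : a < 2 * h * sa := by
    nlinarith [hsa2,
      mul_pos hc (mul_pos (sub_pos.2 ha2h) (show (0:ℝ) < 2 * h + a by linarith)),
      add_nonneg ha0 (le_of_lt (mul_pos (by linarith : (0:ℝ) < 2 * h) hsa0))]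
  have key2 : b ≤ 2 * h * sb := by
    nlinarith [hsb2,
      mul_nonneg (le_of_lt hc) (mul_nonneg (sub_nonneg.2 hb2h) (show (0:ℝ) ≤ 2 * h + b by linarith)),
      show (0:ℝ) < b + 2 * h * sb from by positivity]
  unfold phi
  rw [div_lt_div_iff_of_pos_right hc]
  have hsum : 0 < 2 * h * (sa + sb) - (a + b) := by linarith
  nlinarith [hsa2, hsb2, mul_pos (sub_pos.2 hab) hsum, add_pos hsa0 hsb0]

/-- α ↦ ρ_h(α) is strictly decreasing on (0, 2h], vanishes at 2h,
and maps (0, 2h] bijectively onto [0, arctanh(2h)). -/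
theorem stmt_2 (h : ℝ) (hh : h ∈ Set.Ioo (0 : ℝ) (1 / 2)) :
    StrictAntiOn (rho h) (Set.Ioc 0 (2 * h)) ∧
    rho h (2 * h) = 0 ∧
    Set.BijOn (rho h) (Set.Ioc 0 (2 * h)) (Set.Ico 0 (_root_.artanh (2 * h))) ∧
    _root_.arcosh (1 / Real.sqrt (1 - 4 * h ^ 2)) = _root_.artanh (2 * h) := by
  obtain ⟨h0, h2⟩ := hh
  have hh' : h ∈ Set.Ioo (0 : ℝ) (1 / 2) := ⟨h0, h2⟩
  have hc : (0 : ℝ) < 1 - 4 * h ^ 2 := by nlinarith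
  have hrho_anti : StrictAntiOn (rho h) (Set.Icc 0 (2 * h)) := by
    intro a ha b hb hab
    exact _root_.arcosh_lt_arcosh (phi_ge_one h hh' hb) (phi_strictAntiOn h hh' ha hb hab)
  have hstmt4 : _root_.arcosh (1 / Real.sqrt (1 - 4 * h ^ 2)) = _root_.artanh (2 * h) := by
    have := _root_.arcosh_eq_artanh (t := 2 * h) (by linarith) (by linarith)
    rw [show 1 - (2 * h) ^ 2 = 1 - 4 * h ^ 2 by ring] at this
    exact this
  have hphi0 : phi h 0 = 1 / Real.sqrt (1 - 4 * h ^ 2) := by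
    unfold phi
    rw [show (1 : ℝ) - 4 * h ^ 2 + 0 ^ 2 = 1 - 4 * h ^ 2 by ring]
    rw [div_eq_div_iff (ne_of_gt hc) (ne_of_gt (Real.sqrt_pos.2 hc))]
    have hs : Real.sqrt (1 - 4 * h ^ 2) * Real.sqrt (1 - 4 * h ^ 2) = 1 - 4 * h ^ 2 :=
      Real.mul_self_sqrt (le_of_lt hc)
    linear_combination hs
  have hrho0 : rho h 0 = _root_.artanh (2 * h) := by
    unfold rho
    rw [hphi0, hstmt4]
  have hrho2h : rho h (2 * h) = 0 := by
    have hphi2h : phi h (2 * h) = 1 := by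
      unfold phi
      rw [show (1 : ℝ) - 4 * h ^ 2 + (2 * h) ^ 2 = 1 by ring, Real.sqrt_one]
      rw [div_eq_one_iff_eq (ne_of_gt hc)]
      ring
    unfold rho
    rw [hphi2h, arcosh_one']
  have hmem0 : (0 : ℝ) ∈ Set.Icc 0 (2 * h) := ⟨le_refl 0, by linarith⟩
  have hmem2h : (2 * h) ∈ Set.Icc 0 (2 * h) := ⟨by linarith, le_refl (2 * h)⟩
  have hartanh_pos : 0 < _root_.artanh (2 * h) := by
    have hlt := hrho_anti hmem0 hmem2h (by linarith : (0:ℝ) < 2 * h)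
    rwa [hrho0, hrho2h] at hlt
  -- continuity of rho on Icc
  have hcontphi : Continuous (phi h) := by
    unfold phi
    apply Continuous.div_const
    apply Continuous.add
    · continuity
    · exact Real.continuous_sqrt.comp (by continuity)
  have hcont : ContinuousOn (rho h) (Set.Icc 0 (2 * h)) := by
    unfold rho _root_.arcosh
    apply ContinuousOn.log
    · apply Continuous.continuousOn
      apply hcontphi.add
      exact Real.continuous_sqrt.comp (by continuity)
    · intro x hx
      have h1 := phi_ge_one h hh' hx
      have h2 := Real.sqrt_nonneg ((phi h x) ^ 2 - 1)
      intro habs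
      linarith [habs ▸ (by linarith : (0:ℝ) < phi h x + Real.sqrt ((phi h x) ^ 2 - 1))]
  refine ⟨hrho_anti.mono Set.Ioc_subset_Icc_self, hrho2h, ⟨?_, ?_, ?_⟩, hstmt4⟩
  · -- MapsTo
    intro a ha
    have haIcc : a ∈ Set.Icc 0 (2 * h) := Set.Ioc_subset_Icc_self ha
    constructor
    · exact arcosh_nonneg' (phi_ge_one h hh' haIcc)
    · rw [← hrho0]
      exact hrho_anti hmem0 haIcc ha.1
  · exact (hrho_anti.mono Set.Ioc_subset_Icc_self).injOn
  · -- SurjOn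
    intro y hy
    have h0le : (0 : ℝ) ≤ 2 * h := by linarith
    have hmem : y ∈ Set.Icc (rho h (2 * h)) (rho h 0) := by
      rw [hrho2h, hrho0]
      exact ⟨hy.1, le_of_lt hy.2⟩
    obtain ⟨α, hα, hαy⟩ := intermediate_value_Icc' h0le hcont hmem
    refine ⟨α, ⟨?_, hα.2⟩, hαy⟩
    rcases lt_or_eq_of_le hα.1 with hlt | heq
    · exact hlt
    · exfalso
      rw [← heq] at hαy
      rw [← hαy] at hy
      rw [hrho0] at hy
      exact lt_irrefl _ hy.2
end

section
/- For every h ∈ (0, 1/2) and every α > 0 with α ≠ 2h: (i) the function u_α^h is integrable on the interval (ρ_h(α), ρ_h(α) + 1), so that H_α^h(ρ) is a finite (convergent improper) integral for every ρ > ρ_h(α); (ii) if α < 2h then u_α^h(ρ) → +∞ as ρ → ρ_h(α)⁺, and if α > 2h then u_α^h(ρ) → −∞ as ρ → ρ_h(α)⁺ (i.e. the rotational graph H_α^h is zero valued and has vertical tangent on its base circle). -/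
open Real Set Filter MeasureTheory

lemma cosh_arcosh {x : ℝ} (hx : 1 ≤ x) : Real.cosh (_root_.arcosh x) = x := by
  have h0 : (0:ℝ) ≤ x ^ 2 - 1 := by nlinarith
  have hs : Real.sqrt (x^2-1) ^ 2 = x^2 - 1 := Real.sq_sqrt h0
  have hsn : 0 ≤ Real.sqrt (x^2-1) := Real.sqrt_nonneg _
  have hy : 0 < x + Real.sqrt (x^2-1) := by nlinarith
  have hmul : (x + Real.sqrt (x^2-1)) * (x - Real.sqrt (x^2-1)) = 1 := by nlinarith
  have hinv : (x + Real.sqrt (x^2-1))⁻¹ = x - Real.sqrt (x^2-1) :=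
    (eq_inv_of_mul_eq_one_right hmul).symm
  rw [_root_.arcosh, Real.cosh_eq, Real.exp_log hy, Real.exp_neg, Real.exp_log hy, hinv]
  ring

lemma sinh_arcosh {x : ℝ} (hx : 1 ≤ x) : Real.sinh (_root_.arcosh x) = Real.sqrt (x^2-1) := by
  have h0 : (0:ℝ) ≤ x ^ 2 - 1 := by nlinarith
  have hs : Real.sqrt (x^2-1) ^ 2 = x^2 - 1 := Real.sq_sqrt h0
  have hsn : 0 ≤ Real.sqrt (x^2-1) := Real.sqrt_nonneg _
  have hy : 0 < x + Real.sqrt (x^2-1) := by nlinarith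
  have hmul : (x + Real.sqrt (x^2-1)) * (x - Real.sqrt (x^2-1)) = 1 := by nlinarith
  have hinv : (x + Real.sqrt (x^2-1))⁻¹ = x - Real.sqrt (x^2-1) :=
    (eq_inv_of_mul_eq_one_right hmul).symm
  rw [_root_.arcosh, Real.sinh_eq, Real.exp_log hy, Real.exp_neg, Real.exp_log hy, hinv]
  ring

lemma arcosh_pos {x : ℝ} (hx : 1 < x) : 0 < _root_.arcosh x := by
  have hsn : 0 ≤ Real.sqrt (x^2-1) := Real.sqrt_nonneg _
  exact Real.log_pos (by nlinarith)

lemma cosh_sub_cosh_ge {x y : ℝ} (hy : 0 ≤ y) (hxy : y ≤ x) :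
    Real.sinh y * (x - y) ≤ Real.cosh x - Real.cosh y := by
  have hadd : Real.cosh x = Real.cosh y * Real.cosh (x - y) + Real.sinh y * Real.sinh (x - y) := by
    rw [← Real.cosh_add]; ring_nf
  have ht : 0 ≤ x - y := by linarith
  have h1 : x - y ≤ Real.sinh (x - y) := by
    rcases eq_or_lt_of_le ht with h | h
    · simp [← h]
    · exact (Real.self_lt_sinh_iff.2 h).le
  have h2 : (1:ℝ) ≤ Real.cosh (x - y) := Real.one_le_cosh _
  have h3 : 0 < Real.cosh y := Real.cosh_pos y
  have h4 : 0 ≤ Real.sinh y := Real.sinh_nonneg_iff.2 hy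
  nlinarith

open Topology

set_option maxHeartbeats 1000000

/-- for α ≠ 2h, (i) u_α^h is integrable near the base radius, so
H_α^h is a finite (convergent improper) integral; (ii) u_α^h blows up to +∞
(resp. −∞) at ρ_h(α)⁺ when α < 2h (resp. α > 2h). -/
theorem stmt_6 (h α : ℝ) (hh : h ∈ Set.Ioo (0 : ℝ) (1 / 2)) (hα : 0 < α)
    (hne : α ≠ 2 * h) :
    MeasureTheory.IntegrableOn (uu h α) (Set.Ioo (rho h α) (rho h α + 1)) ∧
    (α < 2 * h →
      Filter.Tendsto (uu h α) (nhdsWithin (rho h α) (Set.Ioi (rho h α)))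
        Filter.atTop) ∧
    (2 * h < α →
      Filter.Tendsto (uu h α) (nhdsWithin (rho h α) (Set.Ioi (rho h α)))
        Filter.atBot) := by
  obtain ⟨h0, h12⟩ := hh
  have hc : (0:ℝ) < 1 - 4 * h ^ 2 := by nlinarith
  have hD : (0:ℝ) < 1 - 4 * h ^ 2 + α ^ 2 := by nlinarith
  set c : ℝ := 1 - 4 * h ^ 2 with hc_def
  set sd : ℝ := Real.sqrt (1 - 4 * h ^ 2 + α ^ 2) with hsd_def
  have hsd2 : sd ^ 2 = c + α ^ 2 := by rw [hsd_def, Real.sq_sqrt hD.le]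
  have hsd0 : 0 < sd := Real.sqrt_pos.2 hD
  have hφ : phi h α = (-2 * α * h + sd) / c := rfl
  have hb : bb h α = -(2 * h * α + sd) / c := rfl
  have hne2 : (0:ℝ) < (α - 2*h)^2 := sq_pos_of_ne_zero (sub_ne_zero.2 hne)
  have hsdgt : c + 2*α*h < sd := by nlinarith [hsd0]
  have hφ1 : 1 < phi h α := by rw [hφ, lt_div_iff₀ hc]; linarith
  set ρ₀ : ℝ := rho h α with hρ₀_def
  have hcosh0 : Real.cosh ρ₀ = phi h α := _root_.cosh_arcosh hφ1.le
  have hρ₀ : 0 < ρ₀ := _root_.arcosh_pos hφ1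
  have hsinh0 : 0 < Real.sinh ρ₀ := Real.sinh_pos_iff.2 hρ₀
  have hsum : phi h α + bb h α = -(4*h*α)/c := by rw [hφ, hb]; field_simp; ring
  have hprod : phi h α * bb h α = -(1+α^2)/c := by
    rw [hφ, hb, div_mul_div_comm]
    rw [div_eq_div_iff (by positivity) (ne_of_gt hc)]
    linear_combination (-c) * hsd2 + (c*α^2) * hc_def
  have key : ∀ s : ℝ, (s^2 - 1) - (-α + 2*h*s)^2 = c * ((s - phi h α) * (s - bb h α)) := by
    intro s
    have e : (s - phi h α) * (s - bb h α)
        = s^2 - (phi h α + bb h α) * s + phi h α * bb h α := by ring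
    rw [e, hsum, hprod]
    field_simp
    ring
  have keyQ : ∀ ρ : ℝ, Real.sinh ρ ^ 2 - (-α + 2*h*Real.cosh ρ)^2
      = c * ((Real.cosh ρ - phi h α) * (Real.cosh ρ - bb h α)) := by
    intro ρ; rw [Real.sinh_sq]; exact key _
  have hbneg : bb h α < 0 := by
    rw [hb]; apply div_neg_of_neg_of_pos _ hc; nlinarith
  have hcosh_gt : ∀ ρ, ρ₀ < ρ → phi h α < Real.cosh ρ := by
    intro ρ hρ
    rw [← hcosh0]
    exact Real.cosh_lt_cosh.2
      (by rw [abs_of_pos hρ₀, abs_of_pos (hρ₀.trans hρ)]; exact hρ)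
  have hQpos : ∀ ρ, ρ₀ < ρ → 0 < Real.sinh ρ ^ 2 - (-α + 2*h*Real.cosh ρ)^2 := by
    intro ρ hρ
    rw [keyQ]
    have h1 : 0 < Real.cosh ρ - phi h α := by linarith [hcosh_gt ρ hρ]
    have h2 : 0 < Real.cosh ρ - bb h α := by linarith [Real.one_le_cosh ρ]
    exact mul_pos hc (mul_pos h1 h2)
  -- Integrability part
  set M : ℝ := 2*h*Real.cosh (ρ₀+1) + α with hM_def
  have hM : 0 < M := by positivity
  set K : ℝ := 2*sd*Real.sinh ρ₀ with hK_def
  have hK : 0 < K := by positivity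
  have hsK : 0 < Real.sqrt K := Real.sqrt_pos.2 hK
  have hint0 : IntervalIntegrable (fun x : ℝ => x ^ (-(1/2):ℝ)) volume 0 1 :=
    intervalIntegral.intervalIntegrable_rpow' (by norm_num)
  have hint1 : IntervalIntegrable (fun x : ℝ => (x - ρ₀) ^ (-(1/2):ℝ)) volume (0+ρ₀) (1+ρ₀) :=
    hint0.comp_sub_right ρ₀
  have hint2 : IntegrableOn (fun x : ℝ => (x - ρ₀) ^ (-(1/2):ℝ)) (Ioo ρ₀ (ρ₀+1)) := by
    rw [intervalIntegrable_iff'] at hint1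
    refine hint1.mono_set ?_
    rw [zero_add]
    intro x hx
    rw [Set.uIcc_of_le (by linarith)]
    exact ⟨hx.1.le, by linarith [hx.2]⟩
  have hintg : IntegrableOn (fun x : ℝ => (M / Real.sqrt K) * (x - ρ₀) ^ (-(1/2):ℝ))
      (Ioo ρ₀ (ρ₀+1)) := hint2.const_mul _
  have hmeas : AEStronglyMeasurable (uu h α) (volume.restrict (Ioo ρ₀ (ρ₀+1))) := by
    have m1 : Measurable fun ρ : ℝ => -α + 2*h*Real.cosh ρ := by fun_prop
    have m2 : Measurable fun ρ : ℝ =>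
        Real.sqrt (Real.sinh ρ ^ 2 - (-α + 2*h*Real.cosh ρ)^2) := by fun_prop
    exact (m1.div m2).aestronglyMeasurable
  have hφb : phi h α - bb h α = 2*sd/c := by rw [hφ, hb]; field_simp; ring
  have hbound : ∀ ρ ∈ Ioo ρ₀ (ρ₀+1),
      ‖uu h α ρ‖ ≤ (M / Real.sqrt K) * (ρ - ρ₀) ^ (-(1/2):ℝ) := by
    intro ρ hρ
    obtain ⟨hρ1, hρ2⟩ := hρ
    have ht : 0 < ρ - ρ₀ := by linarith
    have hQ : 0 < Real.sinh ρ ^ 2 - (-α + 2*h*Real.cosh ρ)^2 := hQpos ρ hρ1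
    -- lower bound for Q
    have hA : Real.sinh ρ₀ * (ρ - ρ₀) ≤ Real.cosh ρ - phi h α := by
      have := cosh_sub_cosh_ge hρ₀.le hρ1.le
      rwa [hcosh0] at this
    have hB : 2*sd/c ≤ Real.cosh ρ - bb h α := by
      have := hcosh_gt ρ hρ1
      linarith [hφb]
    have hQlb : K * (ρ - ρ₀) ≤ Real.sinh ρ ^ 2 - (-α + 2*h*Real.cosh ρ)^2 := by
      rw [keyQ]
      have hA0 : 0 ≤ Real.sinh ρ₀ * (ρ - ρ₀) := by positivity
      have hB0 : (0:ℝ) ≤ 2*sd/c := by positivity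
      calc K * (ρ - ρ₀) = c * ((Real.sinh ρ₀ * (ρ - ρ₀)) * (2*sd/c)) := by
            field_simp [hK_def]; ring
        _ ≤ c * ((Real.cosh ρ - phi h α) * (Real.cosh ρ - bb h α)) := by
            apply mul_le_mul_of_nonneg_left _ hc.le
            exact mul_le_mul hA hB hB0 (by linarith [hcosh_gt ρ hρ1])
    have hsqlb : Real.sqrt K * Real.sqrt (ρ - ρ₀)
        ≤ Real.sqrt (Real.sinh ρ ^ 2 - (-α + 2*h*Real.cosh ρ)^2) := by
      rw [← Real.sqrt_mul hK.le]
      exact Real.sqrt_le_sqrt hQlb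
    have hnum : |(-α + 2*h*Real.cosh ρ)| ≤ M := by
      have hle : Real.cosh ρ ≤ Real.cosh (ρ₀+1) := by
        apply Real.cosh_le_cosh.2
        rw [abs_of_pos (hρ₀.trans hρ1), abs_of_pos (by linarith : (0:ℝ) < ρ₀+1)]
        linarith
      have p1 : 2*h*Real.cosh ρ ≤ 2*h*Real.cosh (ρ₀+1) :=
        mul_le_mul_of_nonneg_left hle (by positivity)
      have p2 : 0 ≤ 2*h*Real.cosh ρ := mul_nonneg (by positivity) (Real.cosh_pos ρ).le
      have p3 : 0 ≤ 2*h*Real.cosh (ρ₀+1) := mul_nonneg (by positivity) (Real.cosh_pos _).le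
      rw [abs_le]
      constructor
      · simp only [hM_def]; linarith
      · simp only [hM_def]; linarith
    simp only [uu]
    rw [Real.norm_eq_abs, abs_div,
      abs_of_pos (Real.sqrt_pos.2 hQ)]
    have hrpow : (ρ - ρ₀) ^ (-(1/2):ℝ) = (Real.sqrt (ρ - ρ₀))⁻¹ := by
      rw [Real.rpow_neg ht.le, Real.sqrt_eq_rpow]
    rw [hrpow]
    have e : M / Real.sqrt K * (Real.sqrt (ρ - ρ₀))⁻¹
        = M / (Real.sqrt K * Real.sqrt (ρ - ρ₀)) := by ring
    rw [e]
    exact div_le_div₀ hM.le hnum (mul_pos hsK (Real.sqrt_pos.2 ht)) hsqlb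
  have hInt : IntegrableOn (uu h α) (Ioo ρ₀ (ρ₀+1)) := by
    apply Integrable.mono' hintg hmeas
    rw [ae_restrict_iff' measurableSet_Ioo]
    exact ae_of_all _ hbound
  -- Limits part
  have hden_to : Tendsto (fun ρ => Real.sqrt (Real.sinh ρ ^ 2 - (-α + 2*h*Real.cosh ρ)^2))
      (𝓝[>] ρ₀) (𝓝[>] (0:ℝ)) := by
    rw [tendsto_nhdsWithin_iff]
    constructor
    · have hcont : Continuous (fun ρ => Real.sqrt (Real.sinh ρ ^ 2 - (-α + 2*h*Real.cosh ρ)^2)) := by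
        fun_prop
      have h1 : Tendsto (fun ρ => Real.sqrt (Real.sinh ρ ^ 2 - (-α + 2*h*Real.cosh ρ)^2))
          (𝓝[>] ρ₀) (𝓝 (Real.sqrt (Real.sinh ρ₀ ^ 2 - (-α + 2*h*Real.cosh ρ₀)^2))) :=
        (hcont.tendsto ρ₀).mono_left nhdsWithin_le_nhds
      have hQ0 : Real.sinh ρ₀ ^ 2 - (-α + 2*h*Real.cosh ρ₀)^2 = 0 := by
        rw [keyQ, hcosh0]; ring
      rwa [hQ0, Real.sqrt_zero] at h1
    · filter_upwards [self_mem_nhdsWithin] with ρ hρ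
      exact Real.sqrt_pos.2 (hQpos ρ hρ)
  have hinv : Tendsto (fun ρ => (Real.sqrt (Real.sinh ρ ^ 2 - (-α + 2*h*Real.cosh ρ)^2))⁻¹)
      (𝓝[>] ρ₀) atTop := tendsto_inv_nhdsGT_zero.comp hden_to
  have hNum : Tendsto (fun ρ => -α + 2*h*Real.cosh ρ) (𝓝[>] ρ₀)
      (𝓝 (-α + 2*h*phi h α)) := by
    have hcont : Continuous (fun ρ : ℝ => -α + 2*h*Real.cosh ρ) := by fun_prop
    have h1 : Tendsto (fun ρ : ℝ => -α + 2*h*Real.cosh ρ) (𝓝[>] ρ₀)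
        (𝓝 (-α + 2*h*Real.cosh ρ₀)) :=
      (hcont.tendsto ρ₀).mono_left nhdsWithin_le_nhds
    rwa [hcosh0] at h1
  have huu_eq : uu h α = fun ρ => (-α + 2*h*Real.cosh ρ) *
      (Real.sqrt (Real.sinh ρ ^ 2 - (-α + 2*h*Real.cosh ρ)^2))⁻¹ := by
    funext ρ; simp only [uu, div_eq_mul_inv]
  have hL : -α + 2*h*phi h α = (2*h*sd - α)/c := by
    rw [hφ]; field_simp; ring
  refine ⟨hInt, ?_, ?_⟩
  · intro hlt
    have hLpos : 0 < -α + 2*h*phi h α := by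
      rw [hL]
      apply div_pos _ hc
      nlinarith [hsd2, hsd0]
    rw [huu_eq]
    exact hNum.pos_mul_atTop hLpos hinv
  · intro hgt
    have hLneg : -α + 2*h*phi h α < 0 := by
      rw [hL]
      apply div_neg_of_neg_of_pos _ hc
      nlinarith [hsd2, hsd0]
    rw [huu_eq]
    exact hNum.neg_mul_atTop hLneg hinv
end

section
/- For every h ∈ (0, 1/2) and every α > 0 there exist a real constant k_α^h and constants C > 0, R > ρ_h(α) such that for all ρ ≥ R one has |H_α^h(ρ) − k_α^h − c_h·ρ| ≤ C·e^{−ρ}, where c_h = 2h/√(1 − 4h²). In particular H_α^h(ρ) − c_h·ρ converges as ρ → +∞ and H_α^h(ρ) → +∞. -/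
open Real Set Filter MeasureTheory

section Aux

variable {h α : ℝ}

lemma hm_pos (hh : h ∈ Set.Ioo (0:ℝ) (1/2)) : 0 < 1 - 4*h^2 := by
  obtain ⟨h1, h2⟩ := hh; nlinarith

lemma phi_root (hh : h ∈ Set.Ioo (0:ℝ) (1/2)) (hα : 0 < α) :
    (1 - 4*h^2) * (phi h α)^2 + 4*α*h*(phi h α) = 1 + α^2 := by
  have hm := hm_pos hh
  have hs : Real.sqrt (1 - 4*h^2 + α^2) ^ 2 = 1 - 4*h^2 + α^2 :=
    Real.sq_sqrt (by nlinarith)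
  unfold phi
  have hm' : (1 - 4*h^2) ≠ 0 := ne_of_gt hm
  field_simp
  linear_combination hs

lemma one_le_phi (hh : h ∈ Set.Ioo (0:ℝ) (1/2)) (hα : 0 < α) : 1 ≤ phi h α := by
  have hm := hm_pos hh
  obtain ⟨h1, _⟩ := hh
  have key : (1 - 4*h^2) + 2*α*h ≤ Real.sqrt (1 - 4*h^2 + α^2) := by
    rw [show (1 - 4*h^2 + α^2) = ((1-4*h^2) + 2*α*h)^2 + (1-4*h^2)*(α-2*h)^2 by ring]
    apply Real.le_sqrt_of_sq_le
    nlinarith [sq_nonneg (α - 2*h)]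
  unfold phi
  rw [le_div_iff₀ hm]
  linarith

lemma rho_nonneg (hh : h ∈ Set.Ioo (0:ℝ) (1/2)) (hα : 0 < α) : 0 ≤ rho h α := by
  have hφ := one_le_phi hh hα
  unfold rho _root_.arcosh
  apply Real.log_nonneg
  have := Real.sqrt_nonneg ((phi h α)^2 - 1)
  linarith

lemma cosh_rho (hh : h ∈ Set.Ioo (0:ℝ) (1/2)) (hα : 0 < α) :
    Real.cosh (rho h α) = phi h α := by
  have hφ := one_le_phi hh hα
  have h1 : (0:ℝ) ≤ (phi h α)^2 - 1 := by nlinarith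
  have hs : Real.sqrt ((phi h α)^2 - 1) ^ 2 = (phi h α)^2 - 1 := Real.sq_sqrt h1
  have hsn : 0 ≤ Real.sqrt ((phi h α)^2 - 1) := Real.sqrt_nonneg _
  have hy : 0 < phi h α + Real.sqrt ((phi h α)^2 - 1) := by linarith
  unfold rho _root_.arcosh
  rw [Real.cosh_log hy]
  have hinv : (phi h α + Real.sqrt ((phi h α)^2 - 1))⁻¹
      = phi h α - Real.sqrt ((phi h α)^2 - 1) := by
    rw [inv_eq_iff_eq_inv, eq_comm, inv_eq_iff_eq_inv, eq_comm]
    · field_simp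
      nlinarith [hs]
  rw [hinv]; ring

lemma sinh_rho (hh : h ∈ Set.Ioo (0:ℝ) (1/2)) (hα : 0 < α) :
    Real.sinh (rho h α) = Real.sqrt ((phi h α)^2 - 1) := by
  have hφ := one_le_phi hh hα
  have h1 : (0:ℝ) ≤ (phi h α)^2 - 1 := by nlinarith
  have hs : Real.sqrt ((phi h α)^2 - 1) ^ 2 = (phi h α)^2 - 1 := Real.sq_sqrt h1
  have hsn : 0 ≤ Real.sqrt ((phi h α)^2 - 1) := Real.sqrt_nonneg _
  have hy : 0 < phi h α + Real.sqrt ((phi h α)^2 - 1) := by linarith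
  unfold rho _root_.arcosh
  rw [Real.sinh_log hy]
  have hinv : (phi h α + Real.sqrt ((phi h α)^2 - 1))⁻¹
      = phi h α - Real.sqrt ((phi h α)^2 - 1) := by
    rw [inv_eq_iff_eq_inv, eq_comm, inv_eq_iff_eq_inv, eq_comm]
    · field_simp
      nlinarith [hs]
  rw [hinv]; ring

lemma D_eq (hh : h ∈ Set.Ioo (0:ℝ) (1/2)) (hα : 0 < α) (w : ℝ) :
    Real.sinh w ^ 2 - (-α + 2 * h * Real.cosh w) ^ 2
      = (Real.cosh w - phi h α) * ((1 - 4*h^2) * (Real.cosh w + phi h α) + 4*α*h) := by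
  have hr := phi_root hh hα
  have hs := Real.sinh_sq w
  linear_combination hs + hr

lemma phi_le_cosh (hh : h ∈ Set.Ioo (0:ℝ) (1/2)) (hα : 0 < α) {w : ℝ}
    (hw : rho h α ≤ w) : phi h α ≤ Real.cosh w := by
  rw [← cosh_rho hh hα]
  have h0 := rho_nonneg hh hα
  rw [Real.cosh_le_cosh]
  rw [abs_of_nonneg h0, abs_of_nonneg (le_trans h0 hw)]
  exact hw

lemma phi_lt_cosh (hh : h ∈ Set.Ioo (0:ℝ) (1/2)) (hα : 0 < α) {w : ℝ}
    (hw : rho h α < w) : phi h α < Real.cosh w := by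
  rw [← cosh_rho hh hα]
  have h0 := rho_nonneg hh hα
  rw [Real.cosh_lt_cosh]
  rw [abs_of_nonneg h0, abs_of_nonneg (le_trans h0 hw.le)]
  exact hw

lemma D_pos (hh : h ∈ Set.Ioo (0:ℝ) (1/2)) (hα : 0 < α) {w : ℝ}
    (hw : rho h α < w) :
    0 < Real.sinh w ^ 2 - (-α + 2 * h * Real.cosh w) ^ 2 := by
  rw [D_eq hh hα]
  have h1 := phi_lt_cosh hh hα hw
  have h2 := one_le_phi hh hα
  have h3 := hm_pos hh
  have h4 := Real.one_le_cosh w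
  obtain ⟨hha, _⟩ := hh
  apply mul_pos (by linarith)
  nlinarith

lemma uu_contAt (hh : h ∈ Set.Ioo (0:ℝ) (1/2)) (hα : 0 < α) {w : ℝ}
    (hw : rho h α < w) : ContinuousAt (uu h α) w := by
  have hD := D_pos hh hα hw
  unfold uu
  apply ContinuousAt.div
  · fun_prop
  · exact (Real.continuous_sqrt.continuousAt).comp (by fun_prop)
  · exact ne_of_gt (Real.sqrt_pos.mpr hD)

lemma uu_far_int (hh : h ∈ Set.Ioo (0:ℝ) (1/2)) (hα : 0 < α) {a b : ℝ}
    (ha : rho h α < a) (hb : rho h α < b) :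
    IntervalIntegrable (uu h α) MeasureTheory.volume a b := by
  apply ContinuousOn.intervalIntegrable
  intro w hw
  have hmin : min a b ≤ w := by
    rw [Set.uIcc, Set.mem_Icc] at hw; exact hw.1
  exact (uu_contAt hh hα (lt_of_lt_of_le (lt_min ha hb) hmin)).continuousWithinAt

end Aux

section Near

variable {h α : ℝ}

lemma cosh_diff_lower (hh : h ∈ Set.Ioo (0:ℝ) (1/2)) (hα : 0 < α) {w : ℝ}
    (hw : rho h α ≤ w) :
    Real.sinh (rho h α) * (w - rho h α) ≤ Real.cosh w - Real.cosh (rho h α) := by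
  set ρ0 := rho h α
  have hid : Real.cosh w - Real.cosh ρ0
      = 2 * Real.sinh ((w+ρ0)/2) * Real.sinh ((w-ρ0)/2) := by
    have h1 := Real.cosh_add ((w+ρ0)/2) ((w-ρ0)/2)
    have h2 := Real.cosh_sub ((w+ρ0)/2) ((w-ρ0)/2)
    have e1 : (w+ρ0)/2 + (w-ρ0)/2 = w := by ring
    have e2 : (w+ρ0)/2 - (w-ρ0)/2 = ρ0 := by ring
    rw [e1] at h1; rw [e2] at h2; linarith
  have h0 := rho_nonneg hh hα
  have hs1 : Real.sinh ρ0 ≤ Real.sinh ((w+ρ0)/2) := by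
    rw [Real.sinh_le_sinh]; linarith
  have hs1' : 0 ≤ Real.sinh ρ0 := Real.sinh_nonneg_iff.mpr h0
  have hs2 : (w-ρ0)/2 ≤ Real.sinh ((w-ρ0)/2) := by
    rcases eq_or_lt_of_le (show (0:ℝ) ≤ (w-ρ0)/2 by linarith) with he | hlt
    · rw [← he]; simp
    · exact (Real.self_lt_sinh_iff.mpr hlt).le
  have hs2' : (0:ℝ) ≤ (w-ρ0)/2 := by linarith
  rw [hid]
  nlinarith [mul_le_mul hs1 hs2 hs2' (le_trans hs1' hs1)]

lemma near_core (sn t d B1 c0 e : ℝ)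
    (hsn : 0 ≤ sn) (ht0 : 0 < t) (ht1 : t ≤ 1) (hd : 0 < d) (hdB : d ≤ B1)
    (hc0 : c0^2 = sn^2) (hstep : sn * t ≤ d) :
    (c0 + 2*e*d)^2 * t ≤ (2*sn + 8*e^2*B1) * d := by
  have e1 : (c0 + 2*e*d)^2 ≤ 2*sn^2 + 8*e^2*d^2 := by
    nlinarith [sq_nonneg (c0 - 2*e*d)]
  have e2 : (c0 + 2*e*d)^2 * t ≤ (2*sn^2 + 8*e^2*d^2) * t :=
    mul_le_mul_of_nonneg_right e1 ht0.le
  have e3 : sn^2 * t ≤ sn * d := by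
    calc sn^2 * t = sn * (sn*t) := by ring
    _ ≤ sn * d := mul_le_mul_of_nonneg_left hstep hsn
  have e4 : d^2 * t ≤ B1 * d := by nlinarith
  have e5 := mul_le_mul_of_nonneg_left e4 (by positivity : (0:ℝ) ≤ 8*e^2)
  nlinarith [e2, e3, e5]

set_option maxHeartbeats 400000 in
lemma uu_near_int (hh : h ∈ Set.Ioo (0:ℝ) (1/2)) (hα : 0 < α) :
    IntervalIntegrable (uu h α) MeasureTheory.volume (rho h α) (rho h α + 1) := by
  obtain ⟨hh1, hh2⟩ := hh
  have hh' : h ∈ Set.Ioo (0:ℝ) (1/2) := ⟨hh1, hh2⟩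
  set ρ0 := rho h α with hρ0def
  set φ := phi h α with hφdef
  have hm : 0 < 1 - 4*h^2 := hm_pos hh'
  have hφ1 : 1 ≤ φ := one_le_phi hh' hα
  have hρ0 : 0 ≤ ρ0 := rho_nonneg hh' hα
  have hsin0 : 0 ≤ Real.sinh ρ0 := Real.sinh_nonneg_iff.mpr hρ0
  have hcosh0 : Real.cosh ρ0 = φ := cosh_rho hh' hα
  set B1 : ℝ := Real.cosh (ρ0+1) - φ with hB1
  have hB1pos : 0 < B1 := by
    have := phi_lt_cosh hh' hα (show ρ0 < ρ0+1 by linarith)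
    simp only [hB1]; linarith
  set K1 : ℝ := 2*Real.sinh ρ0 + 8*h^2*B1 with hK1
  have hK1nn : 0 ≤ K1 := by positivity
  set K : ℝ := Real.sqrt (K1/(2*(1-4*h^2))) with hK
  have hKnn : 0 ≤ K := Real.sqrt_nonneg _
  have hK2 : K^2 = K1/(2*(1-4*h^2)) := Real.sq_sqrt (by positivity)
  -- majorant is interval integrable
  have hmaj : IntervalIntegrable (fun w => K * (w - ρ0) ^ (-(1/2) : ℝ))
      MeasureTheory.volume ρ0 (ρ0+1) := by
    have hbase : IntervalIntegrable (fun x : ℝ => x ^ (-(1/2) : ℝ))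
        MeasureTheory.volume 0 1 := intervalIntegral.intervalIntegrable_rpow' (by norm_num)
    have := (hbase.comp_sub_right ρ0).const_mul K
    simpa [zero_add, add_comm] using this
  apply hmaj.mono_fun
  · -- measurability
    have hsub : Set.uIoc ρ0 (ρ0+1) = Set.Ioc ρ0 (ρ0+1) := Set.uIoc_of_le (by linarith)
    rw [hsub]
    apply ContinuousOn.aestronglyMeasurable _ measurableSet_Ioc
    intro w hw
    exact (uu_contAt hh' hα hw.1).continuousWithinAt
  · -- pointwise bound
    have hsub : Set.uIoc ρ0 (ρ0+1) = Set.Ioc ρ0 (ρ0+1) := Set.uIoc_of_le (by linarith)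
    rw [hsub, Filter.EventuallyLE, ae_restrict_iff' measurableSet_Ioc]
    apply Filter.Eventually.of_forall
    intro w hw
    obtain ⟨hw1, hw2⟩ := hw
    set x := Real.cosh w with hx
    set t := w - ρ0 with ht
    have ht0 : 0 < t := by simp only [ht]; linarith
    have ht1 : t ≤ 1 := by simp only [ht]; linarith
    set N : ℝ := -α + 2*h*x with hN
    set Dw : ℝ := Real.sinh w ^ 2 - N^2 with hDw
    have hDeq : Dw = (x - φ) * ((1 - 4*h^2) * (x + φ) + 4*α*h) := D_eq hh' hα w
    have hxφ : φ < x := phi_lt_cosh hh' hα hw1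
    have hx1 : 1 ≤ x := Real.one_le_cosh w
    have hxB : x - φ ≤ B1 := by
      have : x ≤ Real.cosh (ρ0+1) := by
        rw [Real.cosh_le_cosh, abs_of_nonneg (by linarith : (0:ℝ) ≤ w),
          abs_of_nonneg (by linarith : (0:ℝ) ≤ ρ0+1)]
        linarith
      simp only [hB1]; linarith
    have hstepa : Real.sinh ρ0 * t ≤ x - φ := by
      have := cosh_diff_lower hh' hα hw1.le
      rw [hcosh0] at this
      simpa [ht] using this
    have hNρ0 : (-α + 2*h*φ)^2 = φ^2 - 1 := by
      have hD0 := D_eq hh' hα ρ0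
      rw [hcosh0] at hD0
      rw [sub_self, zero_mul] at hD0
      have hs0 : Real.sinh ρ0 ^2 = φ^2 - 1 := by
        have := Real.sinh_sq ρ0; rw [hcosh0] at this; linarith
      linarith [hD0, hs0]
    have hApos : 2*(1-4*h^2) ≤ (1 - 4*h^2) * (x + φ) + 4*α*h := by
      have h2' : (1-4*h^2)*2 ≤ (1-4*h^2)*(x+φ) :=
        mul_le_mul_of_nonneg_left (by linarith) hm.le
      have h3' := mul_pos hα hh1
      linarith
    have hcore : N^2 * t ≤ K^2 * Dw := by
      have hs0 : Real.sinh ρ0 ^2 = φ^2 - 1 := by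
        have := Real.sinh_sq ρ0; rw [hcosh0] at this; linarith
      have hc0 : (-α + 2*h*φ)^2 = Real.sinh ρ0 ^ 2 := hNρ0.trans hs0.symm
      have h3 : N^2 * t ≤ K1 * (x - φ) := by
        have hmain := near_core (Real.sinh ρ0) t (x-φ) B1 (-α+2*h*φ) h hsin0 ht0 ht1
          (by linarith) hxB hc0 hstepa
        have hEN : N = (-α + 2*h*φ) + 2*h*(x-φ) := by simp only [hN]; ring
        rw [hEN, hK1]
        exact hmain
      have hfin : K1 * (x-φ) ≤ K^2 * Dw := by
        rw [hK2, hDeq]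
        have hA2 : (x - φ) * (2*(1-4*h^2)) ≤ (x - φ)*((1-4*h^2)*(x+φ)+4*α*h) :=
          mul_le_mul_of_nonneg_left hApos (by linarith)
        have heq : K1/(2*(1-4*h^2)) * ((x - φ) * (2*(1-4*h^2))) = K1 * (x-φ) := by
          field_simp
        calc K1*(x-φ) = K1/(2*(1-4*h^2)) * ((x-φ)*(2*(1-4*h^2))) := heq.symm
          _ ≤ K1/(2*(1-4*h^2)) * ((x-φ)*((1-4*h^2)*(x+φ)+4*α*h)) :=
              mul_le_mul_of_nonneg_left hA2 (by positivity)
      exact le_trans h3 hfin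
    have hDpos : 0 < Dw := by
      have := D_pos hh' hα hw1
      simpa [hDw, hN] using this
    -- conclude
    have huu : uu h α w = N / Real.sqrt Dw := by
      simp only [uu, hDw, hN, hx]
    rw [huu]
    have hsD : 0 < Real.sqrt Dw := Real.sqrt_pos.mpr hDpos
    have hst : 0 < Real.sqrt t := Real.sqrt_pos.mpr ht0
    have hrw : (t : ℝ) ^ (-(1/2) : ℝ) = (Real.sqrt t)⁻¹ := by
      rw [Real.rpow_neg ht0.le, Real.sqrt_eq_rpow]
    have hnorm : ‖N / Real.sqrt Dw‖ = |N| / Real.sqrt Dw := by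
      rw [Real.norm_eq_abs, abs_div, abs_of_nonneg (Real.sqrt_nonneg _)]
    rw [hnorm, hrw]
    rw [show K * (Real.sqrt t)⁻¹ = K / Real.sqrt t by ring]
    rw [Real.norm_eq_abs, abs_of_nonneg (div_nonneg hKnn (Real.sqrt_nonneg _))]
    rw [div_le_div_iff₀ hsD hst]
    have lhs_eq : |N| * Real.sqrt t = Real.sqrt (N^2 * t) := by
      rw [Real.sqrt_mul (sq_nonneg N), Real.sqrt_sq_eq_abs]
    have rhs_eq : K * Real.sqrt Dw = Real.sqrt (K^2 * Dw) := by
      rw [Real.sqrt_mul (sq_nonneg K), Real.sqrt_sq hKnn]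
    rw [lhs_eq, rhs_eq]
    exact Real.sqrt_le_sqrt hcore

end Near

section Tail

variable {h α : ℝ}

lemma HH_sub (hh : h ∈ Set.Ioo (0:ℝ) (1/2)) (hα : 0 < α) {a b : ℝ}
    (ha : rho h α + 1 ≤ a) (hab : a ≤ b) :
    HH h α b - HH h α a = ∫ w in a..b, uu h α w := by
  have i1 := uu_near_int hh hα
  have i2 : IntervalIntegrable (uu h α) MeasureTheory.volume (rho h α + 1) a :=
    uu_far_int hh hα (by linarith) (by linarith)
  have i3 : IntervalIntegrable (uu h α) MeasureTheory.volume a b :=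
    uu_far_int hh hα (by linarith) (by linarith)
  have e1 := intervalIntegral.integral_add_adjacent_intervals i1 i2
  have e2 := intervalIntegral.integral_add_adjacent_intervals (i1.trans i2) i3
  unfold HH
  linarith [e1, e2]

lemma denom_lower (S sm N x eh : ℝ) (hx : 0 < x) (hsm : 0 < sm)
    (hS : x*sm/2 ≤ S) (hN : eh*x ≤ N) (heh : 0 < eh) :
    (eh/2) * sm^3 * x^2 ≤ S * sm * (N*sm + 2*eh*S) := by
  have hS0 : 0 < S := lt_of_lt_of_le (by positivity) hS
  have hN0 : 0 < N := lt_of_lt_of_le (by positivity) hN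
  have h1 : eh*x*sm ≤ N*sm + 2*eh*S := by nlinarith
  have h2 : (x*sm/2) * (eh*x*sm) ≤ S * (N*sm + 2*eh*S) := by
    apply mul_le_mul hS h1 (by positivity) hS0.le
  nlinarith [h2, mul_le_mul_of_nonneg_left h2 hsm.le]

lemma Ebound_aux (a e x : ℝ) (ha : 0 < a) (he : 0 < e) (hx : 1 ≤ x) :
    |a^2 + 4*e^2 - 4*a*e*x| ≤ (a+2*e)^2 * x := by
  rw [abs_le]
  constructor
  · nlinarith [mul_pos ha he, mul_nonneg (mul_nonneg ha.le he.le) (by linarith : (0:ℝ) ≤ x)]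
  · nlinarith [mul_pos ha he, mul_nonneg (mul_nonneg ha.le he.le) (by linarith : (0:ℝ) ≤ x)]

set_option maxHeartbeats 400000 in
lemma uu_tail (hh : h ∈ Set.Ioo (0:ℝ) (1/2)) (hα : 0 < α) :
    ∃ R C1 : ℝ, rho h α + 1 ≤ R ∧ 0 ≤ C1 ∧ ∀ w, R ≤ w →
      |uu h α w - 2 * h / Real.sqrt (1 - 4 * h ^ 2)| ≤ C1 * Real.exp (-w) := by
  obtain ⟨hh1, hh2⟩ := hh
  have hh' : h ∈ Set.Ioo (0:ℝ) (1/2) := ⟨hh1, hh2⟩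
  have hm : 0 < 1 - 4*h^2 := hm_pos hh'
  have hρ0 : 0 ≤ rho h α := rho_nonneg hh' hα
  set ρ0 := rho h α with hρ0def
  clear_value ρ0
  set sm := Real.sqrt (1 - 4 * h ^ 2) with hsm_def
  have hsm0 : 0 < sm := Real.sqrt_pos.mpr hm
  have hsm2 : sm^2 = 1 - 4*h^2 := Real.sq_sqrt hm.le
  clear_value sm
  set M : ℝ := (1+α^2)/(4*α*h) + α/h + 1 with hM
  clear_value M
  have hM1 : 1 ≤ M := by
    have h1 : 0 < (1+α^2)/(4*α*h) := by positivity
    have h2 : 0 < α/h := by positivity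
    rw [hM]; linarith
  set R : ℝ := max (ρ0 + 1) (Real.log (2*M)) with hR
  clear_value R
  set C1 : ℝ := 4*(α+2*h)^2/(h*sm^3) with hC1
  clear_value C1
  have hC1nn : 0 ≤ C1 := by rw [hC1]; positivity
  refine ⟨R, C1, by rw [hR]; exact le_max_left _ _, hC1nn, ?_⟩
  intro w hw
  have hwρ0 : ρ0 + 1 ≤ w := by rw [hR] at hw; exact le_trans (le_max_left _ _) hw
  have hx1 : 1 ≤ Real.cosh w := Real.one_le_cosh w
  have hx_half : Real.exp w / 2 ≤ Real.cosh w := by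
    rw [Real.cosh_eq]
    have := Real.exp_pos (-w)
    linarith
  have hxM : M ≤ Real.cosh w := by
    have h1 : Real.log (2*M) ≤ w := by
      rw [hR] at hw; exact le_trans (le_max_right _ _) hw
    have h2 : (2:ℝ)*M ≤ Real.exp w := by
      rw [← Real.exp_log (show (0:ℝ) < 2*M by linarith)]
      exact Real.exp_le_exp.mpr h1
    linarith
  set x := Real.cosh w with hx
  clear_value x
  set N : ℝ := -α + 2*h*x with hN
  clear_value N
  set Dw : ℝ := Real.sinh w ^ 2 - N^2 with hDw
  clear_value Dw
  have hDeq : Dw = (1-4*h^2)*x^2 + 4*α*h*x - (1+α^2) := by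
    have hss := Real.sinh_sq w
    rw [hDw, hN, hss, hx]; ring
  have hN_low : h*x ≤ N := by
    have ha1 : α ≤ h*M := by
      rw [hM]
      have h1 : α/h * h = α := by field_simp
      have h2 : 0 < (1+α^2)/(4*α*h) := by positivity
      nlinarith
    have ha2 : α ≤ h*x := le_trans ha1 (by nlinarith)
    rw [hN]; nlinarith
  have hN0 : 0 < N := lt_of_lt_of_le (by positivity) hN_low
  have hD_low : (1-4*h^2)*x^2/2 ≤ Dw := by
    rw [hDeq]
    have h1 : (1+α^2) ≤ 4*α*h*x := by
      have h2 : (1+α^2)/(4*α*h) ≤ x := by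
        have h3 : 0 < α/h := by positivity
        rw [hM] at hxM; linarith
      rw [div_le_iff₀ (by positivity)] at h2
      linarith [h2]
    nlinarith
  have hDpos : 0 < Dw := lt_of_lt_of_le (by positivity) hD_low
  have hS2 : (Real.sqrt Dw)^2 = Dw := Real.sq_sqrt hDpos.le
  have hS0 : 0 < Real.sqrt Dw := Real.sqrt_pos.mpr hDpos
  set S := Real.sqrt Dw with hS_def
  clear_value S
  have hS_low : x*sm/2 ≤ S := by
    rw [hS_def]
    apply Real.le_sqrt_of_sq_le
    calc (x*sm/2)^2 = sm^2 * x^2/4 := by ring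
    _ ≤ (1-4*h^2)*x^2/2 := by rw [hsm2]; nlinarith
    _ ≤ Dw := hD_low
  have hden0 : 0 < N*sm + 2*h*S := by positivity
  have huu : uu h α w = N / S := by
    rw [hS_def, hDw, hN, hx]
    rfl
  set E : ℝ := α^2 + 4*h^2 - 4*α*h*x with hE
  clear_value E
  have hprod : (N*sm - 2*h*S)*(N*sm + 2*h*S) = E := by
    have expand : (N*sm - 2*h*S)*(N*sm + 2*h*S) = N^2*sm^2 - 4*h^2*S^2 := by ring
    rw [expand, hsm2, hS2, hDeq, hN, hE]
    ring
  have hkey : uu h α w - 2*h/sm = E / (S*sm*(N*sm + 2*h*S)) := by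
    rw [huu, sub_eq_iff_eq_add]
    rw [div_add_div _ _ (by positivity : (S*sm*(N*sm+2*h*S)) ≠ 0) hsm0.ne']
    rw [div_eq_div_iff hS0.ne' (by positivity : (S*sm*(N*sm+2*h*S))*sm ≠ 0)]
    rw [← hprod]
    ring
  have hEbound : |E| ≤ (α+2*h)^2 * x := by
    rw [hE]
    exact Ebound_aux α h x hα hh1 hx1
  have hden_low : (h/2)*sm^3*x^2 ≤ S*sm*(N*sm + 2*h*S) :=
    denom_lower S sm N x h (by linarith) hsm0 hS_low hN_low hh1
  have habs : |uu h α w - 2*h/sm| = |E| / (S*sm*(N*sm+2*h*S)) := by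
    rw [hkey, abs_div, abs_of_pos (by positivity : (0:ℝ) < S*sm*(N*sm+2*h*S))]
  rw [habs]
  have hxe : 1/2 ≤ x * Real.exp (-w) := by
    rw [Real.exp_neg]
    have h2 : Real.exp w / 2 * (Real.exp w)⁻¹ ≤ x * (Real.exp w)⁻¹ :=
      mul_le_mul_of_nonneg_right hx_half (by positivity)
    calc (1:ℝ)/2 = Real.exp w /2 * (Real.exp w)⁻¹ := by
          field_simp
    _ ≤ x * (Real.exp w)⁻¹ := h2
  have hrhs_low : (α+2*h)^2 * x ≤ C1 * Real.exp (-w) * ((h/2)*sm^3*x^2) := by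
    have hc : C1 * Real.exp (-w) * ((h/2)*sm^3*x^2)
        = (α+2*h)^2 * x * (2 * (x * Real.exp (-w))) := by
      rw [hC1]
      field_simp
      ring
    rw [hc]
    have h1 : (1:ℝ) ≤ 2 * (x * Real.exp (-w)) := by linarith
    exact le_mul_of_one_le_right (by positivity) h1
  rw [div_le_iff₀ (by positivity : (0:ℝ) < S*sm*(N*sm+2*h*S))]
  calc |E| ≤ (α+2*h)^2 * x := hEbound
  _ ≤ C1 * Real.exp (-w) * ((h/2)*sm^3*x^2) := hrhs_low
  _ ≤ C1 * Real.exp (-w) * (S*sm*(N*sm+2*h*S)) := by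
      apply mul_le_mul_of_nonneg_left hden_low
      have := Real.exp_pos (-w)
      rw [hC1]; positivity

end Tail

set_option maxHeartbeats 800000 in
/-- asymptotic expansion H_α^h(ρ) = k_α^h + c_h·ρ + O(e^{−ρ}), with
c_h = 2h/√(1 − 4h²); in particular H_α^h(ρ) − c_h·ρ converges and H_α^h → +∞. -/
theorem stmt_8 (h α : ℝ) (hh : h ∈ Set.Ioo (0 : ℝ) (1 / 2)) (hα : 0 < α) :
    ∃ k C R : ℝ, 0 < C ∧ rho h α < R ∧
      (∀ ρ : ℝ, R ≤ ρ →
        |HH h α ρ - k - 2 * h / Real.sqrt (1 - 4 * h ^ 2) * ρ| ≤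
          C * Real.exp (-ρ)) ∧
      Filter.Tendsto (fun ρ => HH h α ρ - 2 * h / Real.sqrt (1 - 4 * h ^ 2) * ρ)
        Filter.atTop (nhds k) ∧
      Filter.Tendsto (HH h α) Filter.atTop Filter.atTop := by
  obtain ⟨R, C1, hR1, hC1, htail⟩ := uu_tail hh hα
  have hh1 := hh.1
  have hm : 0 < 1 - 4*h^2 := hm_pos hh
  have hρ0 : 0 ≤ rho h α := rho_nonneg hh hα
  have hRρ : rho h α < R := by linarith
  have hR0 : 0 < R := by linarith
  set c := 2 * h / Real.sqrt (1 - 4 * h ^ 2) with hc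
  have hc0 : 0 < c := div_pos (by linarith) (Real.sqrt_pos.mpr hm)
  set g : ℝ → ℝ := fun w => uu h α w - c with hg
  have hgmeas : ∀ ρ', R ≤ ρ' →
      AEStronglyMeasurable g (MeasureTheory.volume.restrict (Set.Ioi ρ')) := by
    intro ρ' hρ'
    apply ContinuousOn.aestronglyMeasurable _ measurableSet_Ioi
    intro w hw
    have hww : rho h α < w := lt_of_le_of_lt (by linarith) hw
    exact ((uu_contAt hh hα hww).sub continuousAt_const).continuousWithinAt
  have hgbound : ∀ ρ', R ≤ ρ' →
      ∀ᵐ w ∂(MeasureTheory.volume.restrict (Set.Ioi ρ')), ‖g w‖ ≤ C1 * Real.exp (-w) := by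
    intro ρ' hρ'
    rw [MeasureTheory.ae_restrict_iff' measurableSet_Ioi]
    apply Filter.Eventually.of_forall
    intro w hw
    have hw' : R ≤ w := le_trans hρ' (le_of_lt hw)
    simpa [hg, Real.norm_eq_abs, hc] using htail w hw'
  have hmajint : ∀ ρ' : ℝ,
      MeasureTheory.IntegrableOn (fun w => C1 * Real.exp (-w)) (Set.Ioi ρ')
        MeasureTheory.volume := by
    intro ρ'
    have := (exp_neg_integrableOn_Ioi ρ' (zero_lt_one)).const_mul C1
    simpa [IntegrableOn] using this
  have hgint : ∀ ρ', R ≤ ρ' →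
      MeasureTheory.IntegrableOn g (Set.Ioi ρ') MeasureTheory.volume := by
    intro ρ' hρ'
    exact MeasureTheory.Integrable.mono' (hmajint ρ') (hgmeas ρ' hρ') (hgbound ρ' hρ')
  set I := ∫ w in Set.Ioi R, g w with hI
  set k := HH h α R - c*R + I with hk
  have key : ∀ ρ, R ≤ ρ → HH h α ρ - k - c*ρ = -∫ w in Set.Ioi ρ, g w := by
    intro ρ hρ
    have hsplit : I = (∫ w in Set.Ioc R ρ, g w) + ∫ w in Set.Ioi ρ, g w := by
      rw [hI, ← Set.Ioc_union_Ioi_eq_Ioi hρ]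
      rw [MeasureTheory.setIntegral_union (Set.Ioc_disjoint_Ioi le_rfl) measurableSet_Ioi
        ((hgint R le_rfl).mono_set Set.Ioc_subset_Ioi_self) (hgint ρ hρ)]
    have hHH : HH h α ρ - HH h α R = ∫ w in R..ρ, uu h α w := HH_sub hh hα hR1 hρ
    have huuint : IntervalIntegrable (uu h α) MeasureTheory.volume R ρ :=
      uu_far_int hh hα (by linarith) (by linarith)
    have hgi : (∫ w in R..ρ, g w) = (∫ w in R..ρ, uu h α w) - c*(ρ - R) := by
      simp only [hg]
      rw [intervalIntegral.integral_sub huuint intervalIntegrable_const]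
      rw [intervalIntegral.integral_const]
      rw [smul_eq_mul]; ring
    have hIoc : (∫ w in Set.Ioc R ρ, g w) = ∫ w in R..ρ, g w :=
      (intervalIntegral.integral_of_le hρ).symm
    rw [hk]
    linarith [hHH, hgi, hsplit, hIoc]
  have bound : ∀ ρ, R ≤ ρ → |HH h α ρ - k - c*ρ| ≤ C1 * Real.exp (-ρ) := by
    intro ρ hρ
    rw [key ρ hρ, abs_neg]
    have hnb : ‖∫ w in Set.Ioi ρ, g w‖ ≤ ∫ w in Set.Ioi ρ, C1 * Real.exp (-w) :=
      MeasureTheory.norm_integral_le_of_norm_le (hmajint ρ) (hgbound ρ hρ)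
    rw [Real.norm_eq_abs] at hnb
    have heval : (∫ w in Set.Ioi ρ, C1 * Real.exp (-w)) = C1 * Real.exp (-ρ) := by
      rw [MeasureTheory.integral_const_mul, integral_exp_neg_Ioi]
    linarith [hnb, heval.ge]
  have bound' : ∀ ρ, R ≤ ρ → |HH h α ρ - k - c*ρ| ≤ (C1+1) * Real.exp (-ρ) := by
    intro ρ hρ
    have := bound ρ hρ
    have he := Real.exp_pos (-ρ)
    nlinarith
  refine ⟨k, C1 + 1, R, by linarith, hRρ, bound', ?_, ?_⟩
  · -- convergence to k
    have h1 : Filter.Tendsto (fun ρ => |HH h α ρ - c*ρ - k|) Filter.atTop (nhds 0) := by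
      apply squeeze_zero' (Filter.Eventually.of_forall fun ρ => abs_nonneg _)
        (g := fun ρ => (C1+1) * Real.exp (-ρ))
      · filter_upwards [Filter.eventually_ge_atTop R] with ρ hρ
        have heq : HH h α ρ - c*ρ - k = HH h α ρ - k - c*ρ := by ring
        rw [heq]
        exact bound' ρ hρ
      · have := Real.tendsto_exp_neg_atTop_nhds_zero.const_mul (C1+1)
        simpa using this
    have h2 : Filter.Tendsto (fun ρ => HH h α ρ - c*ρ - k) Filter.atTop (nhds 0) :=
      (tendsto_zero_iff_abs_tendsto_zero _).mpr h1
    have h3 := h2.add_const k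
    simpa [sub_add_cancel] using h3
  · -- tendsto atTop
    have hlin : Filter.Tendsto (fun ρ => k - (C1+1) + c * ρ) Filter.atTop Filter.atTop := by
      apply Filter.tendsto_atTop_add_const_left
      exact Filter.Tendsto.const_mul_atTop hc0 Filter.tendsto_id
    apply Filter.tendsto_atTop_mono' Filter.atTop _ hlin
    filter_upwards [Filter.eventually_ge_atTop R] with ρ hρ
    have hb := abs_le.mp (bound' ρ hρ)
    have he1 : Real.exp (-ρ) ≤ 1 := by
      rw [Real.exp_le_one_iff]; linarith
    have hmul : (C1+1) * Real.exp (-ρ) ≤ (C1+1) * 1 :=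
      mul_le_mul_of_nonneg_left he1 (by linarith)
    linarith [hb.1]
end

section
/- For every h ∈ (0, 1/2), every α ∈ (0, 2h) and every z > 0, the partial derivative with respect to α of ũ_α^h(z) = ( −α + 2h·(z + φ(h,α)) ) / ( √z · √(z + φ(h,α) − b(h,α)) · √((z + φ(h,α))² − 1) ) is strictly negative; i.e. the map α ↦ ũ_α^h(z) has strictly negative derivative at every α ∈ (0, 2h). -/
open Real Set Filter MeasureTheory

/-- The integrand ũ_α^h(z) of H_α^h after the change of variable z = cosh ρ − φ. -/
noncomputable def utilde (h α z : ℝ) : ℝ :=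
  (-α + 2 * h * (z + phi h α)) /
    (Real.sqrt z * Real.sqrt (z + phi h α - bb h α) *
      Real.sqrt ((z + phi h α) ^ 2 - 1))


noncomputable def sA (h a : ℝ) : ℝ := Real.sqrt (1 - 4 * h ^ 2 + a ^ 2)
noncomputable def NN (h z a : ℝ) : ℝ := 2 * h * z + (2 * h * sA h a - a) / (1 - 4 * h ^ 2)
noncomputable def QQ (h z a : ℝ) : ℝ := z ^ 2 + 2 * z * sA h a / (1 - 4 * h ^ 2)
noncomputable def FF (h z a : ℝ) : ℝ :=
  QQ h z a + (1 - 4 * h ^ 2) * (QQ h z a) ^ 2 / (NN h z a) ^ 2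

section
variable (h z a : ℝ)

lemma sA_sq (hD : 0 < 1 - 4 * h ^ 2) : sA h a ^ 2 = 1 - 4 * h ^ 2 + a ^ 2 := by
  rw [sA, Real.sq_sqrt]; nlinarith [sq_nonneg a]

lemma sA_pos (hD : 0 < 1 - 4 * h ^ 2) : 0 < sA h a := by
  apply Real.sqrt_pos.2; nlinarith [sq_nonneg a]

lemma sA_gt (hD : 0 < 1 - 4 * h ^ 2) (ha0 : 0 < a) (ha2 : a < 2 * h) (h0 : 0 < h) :
    2 * h * a < sA h a := by
  have key : 0 < (1 - 4 * h ^ 2) * (1 + a ^ 2) := by positivity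
  have p1 : 0 < sA h a + 2 * h * a := by nlinarith [sA_pos h a hD]
  nlinarith [sA_sq h a hD]

lemma sA_gt' (hD : 0 < 1 - 4 * h ^ 2) (ha0 : 0 < a) (ha2 : a < 2 * h) (h0 : 0 < h) :
    a < 2 * h * sA h a := by
  have key : 0 < (1 - 4 * h ^ 2) * (4 * h ^ 2 - a ^ 2) := by
    apply mul_pos hD; nlinarith
  have p1 : 0 < 2 * h * sA h a + a := by nlinarith [sA_pos h a hD]
  nlinarith [sA_sq h a hD]

lemma NN_pos (hD : 0 < 1 - 4 * h ^ 2) (h0 : 0 < h) (ha0 : 0 < a) (ha2 : a < 2 * h)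
    (hz : 0 < z) : 0 < NN h z a := by
  have h1 : 0 < (2 * h * sA h a - a) / (1 - 4 * h ^ 2) :=
    div_pos (by linarith [sA_gt' h a hD ha0 ha2 h0]) hD
  have h2 : 0 < 2 * h * z := by positivity
  unfold NN; linarith

lemma QQ_pos (hD : 0 < 1 - 4 * h ^ 2) (hz : 0 < z) : 0 < QQ h z a := by
  have := sA_pos h a hD
  unfold QQ; positivity

lemma FF_pos (hD : 0 < 1 - 4 * h ^ 2) (h0 : 0 < h) (ha0 : 0 < a) (ha2 : a < 2 * h)
    (hz : 0 < z) : 0 < FF h z a := by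
  have h1 := QQ_pos h z a hD hz
  have h2 := NN_pos h z a hD h0 ha0 ha2 hz
  unfold FF; positivity
end

section
variable (h z a : ℝ)

lemma utilde_eq (hD : 0 < 1 - 4 * h ^ 2) (h0 : 0 < h) (ha0 : 0 < a) (ha2 : a < 2 * h)
    (hz : 0 < z) : utilde h a z = (Real.sqrt (FF h z a))⁻¹ := by
  have hDne : (1 - 4 * h ^ 2) ≠ 0 := ne_of_gt hD
  have hs2 := sA_sq h a hD
  have hsp := sA_pos h a hD
  have hNp := NN_pos h z a hD h0 ha0 ha2 hz
  have hQp := QQ_pos h z a hD hz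
  -- numerator
  have hnum : -a + 2 * h * (z + phi h a) = NN h z a := by
    unfold phi NN sA; field_simp [show (1 - h ^ 2 * 4 : ℝ) ≠ 0 by linarith]; ring
  -- first factor
  have hfac1 : z + phi h a - bb h a = z + 2 * sA h a / (1 - 4 * h ^ 2) := by
    unfold phi bb sA; field_simp; ring
  -- second factor
  have hs2' : Real.sqrt (1 - 4 * h ^ 2 + a ^ 2) ^ 2 = 1 - 4 * h ^ 2 + a ^ 2 := by
    rw [Real.sq_sqrt]; nlinarith [sq_nonneg a]
  have hfac2 : (z + phi h a) ^ 2 - 1 = NN h z a ^ 2 + (1 - 4 * h ^ 2) * QQ h z a := by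
    unfold phi NN QQ sA
    field_simp [show (1 - h ^ 2 * 4 : ℝ) ≠ 0 by linarith]
    have hs2'' : Real.sqrt (1 - h ^ 2 * 4 + a ^ 2) ^ 2 = 1 - h ^ 2 * 4 + a ^ 2 := by
      rw [Real.sq_sqrt]; nlinarith [sq_nonneg a]
    linear_combination (1 - 4 * h ^ 2) * hs2''
  have hFp := FF_pos h z a hD h0 ha0 ha2 hz
  rw [utilde, hnum, hfac1, hfac2]
  have e1 : Real.sqrt z * Real.sqrt (z + 2 * sA h a / (1 - 4 * h ^ 2)) =
      Real.sqrt (QQ h z a) := by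
    rw [← Real.sqrt_mul hz.le]
    congr 1
    unfold QQ; ring
  have e2 : Real.sqrt (QQ h z a) * Real.sqrt (NN h z a ^ 2 + (1 - 4 * h ^ 2) * QQ h z a) =
      NN h z a * Real.sqrt (FF h z a) := by
    rw [← Real.sqrt_mul hQp.le]
    have : QQ h z a * (NN h z a ^ 2 + (1 - 4 * h ^ 2) * QQ h z a) =
        NN h z a ^ 2 * FF h z a := by
      unfold FF; field_simp
    rw [this, Real.sqrt_mul (sq_nonneg _), Real.sqrt_sq hNp.le]
  rw [e1, e2]
  rw [div_eq_iff (by positivity)]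
  field_simp
end

section
variable (h z a : ℝ)

lemma hasDerivAt_sA (hD : 0 < 1 - 4 * h ^ 2) :
    HasDerivAt (fun a => sA h a) (a / sA h a) a := by
  have h1 : HasDerivAt (fun a : ℝ => 1 - 4 * h ^ 2 + a ^ 2) (2 * a) a := by
    simpa using (hasDerivAt_pow 2 a).const_add (1 - 4 * h ^ 2)
  have h2 : (1 - 4 * h ^ 2 + a ^ 2) ≠ 0 := by nlinarith [sq_nonneg a]
  have := h1.sqrt h2
  refine this.congr_deriv (Eq.symm ?_)
  rw [eq_div_iff (show (2 * Real.sqrt (1 - 4 * h ^ 2 + a ^ 2)) ≠ 0 from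
    mul_ne_zero two_ne_zero (sA_pos h a hD).ne')]
  unfold sA
  field_simp

lemma hasDerivAt_NN (hD : 0 < 1 - 4 * h ^ 2) :
    HasDerivAt (fun a => NN h z a) ((2 * h * (a / sA h a) - 1) / (1 - 4 * h ^ 2)) a := by
  have := ((( hasDerivAt_sA h a hD).const_mul (2 * h)).sub (hasDerivAt_id a)).div_const
      (1 - 4 * h ^ 2)
  simpa [NN] using this.const_add (2 * h * z)

lemma hasDerivAt_QQ (hD : 0 < 1 - 4 * h ^ 2) :
    HasDerivAt (fun a => QQ h z a) (2 * z * (a / sA h a) / (1 - 4 * h ^ 2)) a := by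
  have := (((hasDerivAt_sA h a hD).const_mul (2 * z)).div_const (1 - 4 * h ^ 2)).const_add
      (z ^ 2)
  exact this

lemma hasDerivAt_FF (hD : 0 < 1 - 4 * h ^ 2) (h0 : 0 < h) (ha0 : 0 < a) (ha2 : a < 2 * h)
    (hz : 0 < z) :
    HasDerivAt (fun a => FF h z a)
      (2 * z * (a / sA h a) / (1 - 4 * h ^ 2) +
        ((1 - 4 * h ^ 2) * (2 * QQ h z a * (2 * z * (a / sA h a) / (1 - 4 * h ^ 2))) *
            NN h z a ^ 2 -
          (1 - 4 * h ^ 2) * QQ h z a ^ 2 *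
            (2 * NN h z a * ((2 * h * (a / sA h a) - 1) / (1 - 4 * h ^ 2)))) /
          (NN h z a ^ 2) ^ 2) a := by
  have hNp := NN_pos h z a hD h0 ha0 ha2 hz
  have hQ := hasDerivAt_QQ h z a hD
  have hN := hasDerivAt_NN h z a hD
  have hnum : HasDerivAt (fun a => (1 - 4 * h ^ 2) * QQ h z a ^ 2)
      ((1 - 4 * h ^ 2) * (2 * QQ h z a * (2 * z * (a / sA h a) / (1 - 4 * h ^ 2)))) a := by
    have := ((hQ.pow 2).const_mul (1 - 4 * h ^ 2))
    refine this.congr_deriv ?_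
    ring
  have hden : HasDerivAt (fun a => NN h z a ^ 2)
      (2 * NN h z a * ((2 * h * (a / sA h a) - 1) / (1 - 4 * h ^ 2))) a := by
    have := hN.pow 2
    refine this.congr_deriv ?_
    ring
  exact hQ.add (hnum.div hden (by positivity))

end

/-- for α ∈ (0, 2h) and z > 0, the map α ↦ ũ_α^h(z) has strictly
negative derivative at α. -/
theorem stmt_13 (h α z : ℝ) (hh : h ∈ Set.Ioo (0 : ℝ) (1 / 2))
    (hα : α ∈ Set.Ioo 0 (2 * h)) (hz : 0 < z) :
    DifferentiableAt ℝ (fun a => utilde h a z) α ∧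
    deriv (fun a => utilde h a z) α < 0 := by
  obtain ⟨h0, h12⟩ := hh
  obtain ⟨ha0, ha2⟩ := hα
  have hD : 0 < 1 - 4 * h ^ 2 := by nlinarith
  have hsp := sA_pos h α hD
  have hNp := NN_pos h z α hD h0 ha0 ha2 hz
  have hQp := QQ_pos h z α hD hz
  have hFp := FF_pos h z α hD h0 ha0 ha2 hz
  have hsF : 0 < Real.sqrt (FF h z α) := Real.sqrt_pos.2 hFp
  set Q' : ℝ := 2 * z * (α / sA h α) / (1 - 4 * h ^ 2) with hQ'def
  set N' : ℝ := (2 * h * (α / sA h α) - 1) / (1 - 4 * h ^ 2) with hN'def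
  set dF : ℝ := Q' +
      ((1 - 4 * h ^ 2) * (2 * QQ h z α * Q') * NN h z α ^ 2 -
        (1 - 4 * h ^ 2) * QQ h z α ^ 2 * (2 * NN h z α * N')) / (NN h z α ^ 2) ^ 2
    with hdFdef
  have hF : HasDerivAt (fun a => FF h z a) dF α := hasDerivAt_FF h z α hD h0 ha0 ha2 hz
  have hQ'pos : 0 < Q' := by rw [hQ'def]; positivity
  have hN'neg : N' < 0 := by
    rw [hN'def]
    apply div_neg_of_neg_of_pos _ hD
    have h1 : 2 * h * α < sA h α := sA_gt h α hD ha0 ha2 h0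
    have : 2 * h * (α / sA h α) < 1 := by
      rw [mul_div_assoc'] at *
      exact (div_lt_one hsp).2 h1
    linarith
  have hdFpos : 0 < dF := by
    rw [hdFdef]
    have A : 0 < (1 - 4 * h ^ 2) * (2 * QQ h z α * Q') * NN h z α ^ 2 := by positivity
    have B : (1 - 4 * h ^ 2) * QQ h z α ^ 2 * (2 * NN h z α * N') < 0 := by
      apply mul_neg_of_pos_of_neg (by positivity)
      exact mul_neg_of_pos_of_neg (by positivity) hN'neg
    have C : 0 < ((1 - 4 * h ^ 2) * (2 * QQ h z α * Q') * NN h z α ^ 2 -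
        (1 - 4 * h ^ 2) * QQ h z α ^ 2 * (2 * NN h z α * N')) / (NN h z α ^ 2) ^ 2 := by
      apply div_pos (by linarith) (by positivity)
    linarith
  have hg : HasDerivAt (fun a => (Real.sqrt (FF h z a))⁻¹)
      (-(dF / (2 * Real.sqrt (FF h z α))) / Real.sqrt (FF h z α) ^ 2) α :=
    (hF.sqrt (ne_of_gt hFp)).inv (ne_of_gt hsF)
  have hev : (fun a => utilde h a z) =ᶠ[nhds α] fun a => (Real.sqrt (FF h z a))⁻¹ := by
    filter_upwards [Ioo_mem_nhds ha0 ha2] with a ha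
    exact utilde_eq h z a hD h0 ha.1 ha.2 hz
  refine ⟨hev.differentiableAt_iff.2 hg.differentiableAt, ?_⟩
  rw [hev.deriv_eq, hg.deriv]
  apply div_neg_of_neg_of_pos _ (by positivity)
  have : 0 < dF / (2 * Real.sqrt (FF h z α)) := div_pos hdFpos (by positivity)
  linarith
end

section
/- For every h ∈ (0, 1/2) and every z > 0, the derivative of the map α ↦ ũ_α^h(z) at α = 2h equals −(1/z)·√(z + 2)/( (1 − 4h²)·( z + 2/(1 − 4h²) )^{3/2} ). Moreover this function of z is not integrable near 0: the integral ∫_0^1 (1/z)·√(z + 2)/( (1 − 4h²)·( z + 2/(1 − 4h²) )^{3/2} ) dz diverges to +∞. -/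
open Real Set Filter MeasureTheory

lemma aux_tendsto (h : ℝ) (hh : h ∈ Set.Ioo (0 : ℝ) (1 / 2)) :
    Filter.Tendsto
      (fun ε => ∫ z in ε..1, 1 / z * (Real.sqrt (z + 2) /
        ((1 - 4 * h ^ 2) * (z + 2 / (1 - 4 * h ^ 2)) ^ ((3 : ℝ) / 2))))
      (nhdsWithin 0 (Set.Ioi 0)) Filter.atTop := by
  obtain ⟨h0, h12⟩ := hh
  have hk : 0 < 1 - 4 * h ^ 2 := by nlinarith
  set k := 1 - 4 * h ^ 2 with hkdef
  have hm : 0 < Real.sqrt 2 / (k * (1 + 2 / k) ^ ((3 : ℝ) / 2)) := by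
    apply div_pos (Real.sqrt_pos.mpr (by norm_num))
    exact mul_pos hk (Real.rpow_pos_of_pos (by positivity) _)
  set m := Real.sqrt 2 / (k * (1 + 2 / k) ^ ((3 : ℝ) / 2)) with hmdef
  have hcont : Continuous (fun z : ℝ => Real.sqrt (z + 2) / (k * (z + 2 / k) ^ ((3 : ℝ) / 2))) →
      True := fun _ => trivial
  have key : ∀ ε ∈ Ioo (0:ℝ) 1, m * Real.log (1 / ε) ≤
      ∫ z in ε..1, 1 / z * (Real.sqrt (z + 2) / (k * (z + 2 / k) ^ ((3 : ℝ) / 2))) := by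
    intro ε hε
    have hε0 := hε.1
    have h0u : (0:ℝ) ∉ uIcc ε 1 := by
      rw [Set.uIcc_of_le hε.2.le]
      intro hc; exact absurd (hc.1) (not_le.mpr hε0)
    have h1 : ∫ z in ε..1, m * (1 / z) = m * Real.log (1 / ε) := by
      rw [intervalIntegral.integral_const_mul, integral_one_div h0u]
    rw [← h1]
    apply intervalIntegral.integral_mono_on hε.2.le
    · exact (continuousOn_const.mul ((continuousOn_const.div continuousOn_id (by
        intro x hx
        rw [Set.uIcc_of_le hε.2.le] at hx
        exact ne_of_gt (lt_of_lt_of_le hε0 hx.1))))).intervalIntegrable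
    · apply ContinuousOn.intervalIntegrable
      apply ContinuousOn.mul
      · exact continuousOn_const.div continuousOn_id (by
          intro x hx
          rw [Set.uIcc_of_le hε.2.le] at hx
          exact ne_of_gt (lt_of_lt_of_le hε0 hx.1))
      · apply ContinuousOn.div
        · exact (continuous_id.add continuous_const).sqrt.continuousOn
        · exact (continuous_const.mul ((continuous_id.add continuous_const).rpow_const
            (fun x => Or.inr (by norm_num)))).continuousOn
        · intro x hx
          rw [Set.uIcc_of_le hε.2.le] at hx
          have hx0 : (0:ℝ) < x := lt_of_lt_of_le hε0 hx.1
          have : (0:ℝ) < x + 2 / k := by positivity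
          exact ne_of_gt (mul_pos hk (Real.rpow_pos_of_pos this _))
    · intro x hx
      have hx0 : 0 < x := lt_of_lt_of_le hε0 hx.1
      rw [mul_comm]
      refine mul_le_mul_of_nonneg_left ?_ (by positivity : (0:ℝ) ≤ 1 / x)
      rw [hmdef]
      refine div_le_div₀ (Real.sqrt_nonneg _) (Real.sqrt_le_sqrt (by linarith))
        (mul_pos hk (Real.rpow_pos_of_pos (by positivity) _)) ?_
      exact mul_le_mul_of_nonneg_left
        (Real.rpow_le_rpow (by positivity) (by linarith [hx.2]) (by norm_num)) hk.le
  have hlog : Tendsto (fun ε : ℝ => m * Real.log (1 / ε)) (nhdsWithin 0 (Set.Ioi 0)) atTop := by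
    apply Tendsto.const_mul_atTop hm
    have : Tendsto (fun ε : ℝ => -Real.log ε) (nhdsWithin 0 (Set.Ioi 0)) atTop :=
      tendsto_neg_atBot_atTop.comp Real.tendsto_log_nhdsGT_zero
    simpa [one_div, Real.log_inv] using this
  apply tendsto_atTop_mono' _ ?_ hlog
  filter_upwards [Ioo_mem_nhdsGT_of_mem (by norm_num : (0:ℝ) ∈ Ico (0:ℝ) 1)] with ε hε using
    key ε hε

lemma aux_nonint (h : ℝ) (hh : h ∈ Set.Ioo (0 : ℝ) (1 / 2)) :
    ¬ MeasureTheory.IntegrableOn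
        (fun z => 1 / z * (Real.sqrt (z + 2) /
          ((1 - 4 * h ^ 2) * (z + 2 / (1 - 4 * h ^ 2)) ^ ((3 : ℝ) / 2))))
        (Set.Ioo 0 1) := by
  intro H
  have hk : 0 < 1 - 4 * h ^ 2 := by obtain ⟨h0, h12⟩ := hh; nlinarith
  set F := fun z : ℝ => 1 / z * (Real.sqrt (z + 2) /
      ((1 - 4 * h ^ 2) * (z + 2 / (1 - 4 * h ^ 2)) ^ ((3 : ℝ) / 2))) with hF
  have hnn : 0 ≤ᶠ[ae (volume.restrict (Ioo (0:ℝ) 1))] F := by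
    filter_upwards [ae_restrict_mem measurableSet_Ioo] with x hx
    have hx0 : (0:ℝ) < x := hx.1
    have hx1 : (0:ℝ) < x + 2 / (1 - 4 * h ^ 2) := by positivity
    exact mul_nonneg (by positivity)
      (div_nonneg (Real.sqrt_nonneg _)
        (mul_nonneg hk.le (Real.rpow_nonneg hx1.le _)))
  have hev : ∀ᶠ ε in nhdsWithin (0:ℝ) (Set.Ioi 0),
      (∫ z in Set.Ioo (0:ℝ) 1, F z) < ∫ z in ε..1, F z ∧ ε ∈ Set.Ioo (0:ℝ) 1 :=
    ((aux_tendsto h hh).eventually_gt_atTop _).and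
      (Filter.eventually_of_mem (Ioo_mem_nhdsGT_of_mem (by norm_num : (0:ℝ) ∈ Ico (0:ℝ) 1))
        (fun x hx => hx))
  obtain ⟨ε, hgt, hε⟩ := hev.exists
  have hle : ∫ z in ε..1, F z ≤ ∫ z in Set.Ioo (0:ℝ) 1, F z := by
    rw [intervalIntegral.integral_of_le hε.2.le, integral_Ioc_eq_integral_Ioo]
    exact setIntegral_mono_set H hnn
      (HasSubset.Subset.eventuallyLE (Set.Ioo_subset_Ioo hε.1.le le_rfl))
  linarith

lemma aux_deriv (h : ℝ) (hh : h ∈ Set.Ioo (0 : ℝ) (1 / 2)) (z : ℝ) (hz : 0 < z) :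
    deriv (fun a => utilde h a z) (2 * h) =
      -(1 / z) * (Real.sqrt (z + 2) /
        ((1 - 4 * h ^ 2) * (z + 2 / (1 - 4 * h ^ 2)) ^ ((3 : ℝ) / 2))) := by
  obtain ⟨h0, h12⟩ := hh
  have hk : 0 < 1 - 4 * h ^ 2 := by nlinarith
  have key : 1 - 4 * h ^ 2 + (2 * h) ^ 2 = 1 := by ring
  -- derivative of the inner polynomial
  have hg : HasDerivAt (fun a : ℝ => 1 - 4 * h ^ 2 + a ^ 2) (4 * h) (2 * h) := by
    have := (hasDerivAt_pow 2 (2 * h)).const_add (1 - 4 * h ^ 2)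
    refine this.congr_deriv ?_
    push_cast; ring
  have hgne : 1 - 4 * h ^ 2 + (2 * h) ^ 2 ≠ 0 := by rw [key]; norm_num
  -- derivative of the square root
  have hsr : HasDerivAt (fun a : ℝ => Real.sqrt (1 - 4 * h ^ 2 + a ^ 2)) (2 * h) (2 * h) := by
    have h2 := hg.sqrt hgne
    convert h2 using 1
    rw [key, Real.sqrt_one]
    ring
  -- derivative of phi
  have hlin : HasDerivAt (fun a : ℝ => -2 * a * h) (-2 * h) (2 * h) := by
    simpa using ((hasDerivAt_id (2 * h)).const_mul (-2 : ℝ)).mul_const h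
  have hφ : HasDerivAt
      (fun a : ℝ => (-2 * a * h + Real.sqrt (1 - 4 * h ^ 2 + a ^ 2)) / (1 - 4 * h ^ 2))
      0 (2 * h) := by
    have := (hlin.add hsr).div_const (1 - 4 * h ^ 2)
    refine this.congr_deriv ?_
    ring
  -- derivative of bb
  have hlin2 : HasDerivAt (fun a : ℝ => 2 * h * a) (2 * h) (2 * h) := by
    simpa using (hasDerivAt_id (2 * h)).const_mul (2 * h)
  have hbb : HasDerivAt
      (fun a : ℝ => -(2 * h * a + Real.sqrt (1 - 4 * h ^ 2 + a ^ 2)) / (1 - 4 * h ^ 2))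
      (-(4 * h) / (1 - 4 * h ^ 2)) (2 * h) := by
    have := ((hlin2.add hsr).neg).div_const (1 - 4 * h ^ 2)
    refine this.congr_deriv ?_
    ring
  -- value lemmas
  have hφval : (-2 * (2 * h) * h + Real.sqrt (1 - 4 * h ^ 2 + (2 * h) ^ 2)) / (1 - 4 * h ^ 2)
      = 1 := by
    rw [key, Real.sqrt_one, div_eq_one_iff_eq hk.ne']; ring
  have hval : z + (-2 * (2 * h) * h + Real.sqrt (1 - 4 * h ^ 2 + (2 * h) ^ 2)) / (1 - 4 * h ^ 2)
      - -(2 * h * (2 * h) + Real.sqrt (1 - 4 * h ^ 2 + (2 * h) ^ 2)) / (1 - 4 * h ^ 2)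
      = z + 2 / (1 - 4 * h ^ 2) := by
    rw [key, Real.sqrt_one]; field_simp; ring
  have hvalB : (z + (-2 * (2 * h) * h + Real.sqrt (1 - 4 * h ^ 2 + (2 * h) ^ 2))
      / (1 - 4 * h ^ 2)) ^ 2 - 1 = z ^ 2 + 2 * z := by
    rw [hφval]; ring
  have hNval : -(2 * h) + 2 * h * (z + (-2 * (2 * h) * h +
      Real.sqrt (1 - 4 * h ^ 2 + (2 * h) ^ 2)) / (1 - 4 * h ^ 2)) = 2 * h * z := by
    rw [hφval]; ring
  have hApos : 0 < z + 2 / (1 - 4 * h ^ 2) := by positivity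
  -- A
  have hA : HasDerivAt
      (fun a : ℝ => Real.sqrt (z + (-2 * a * h + Real.sqrt (1 - 4 * h ^ 2 + a ^ 2)) / (1 - 4 * h ^ 2)
        - -(2 * h * a + Real.sqrt (1 - 4 * h ^ 2 + a ^ 2)) / (1 - 4 * h ^ 2)))
      ((4 * h / (1 - 4 * h ^ 2)) / (2 * Real.sqrt (z + 2 / (1 - 4 * h ^ 2)))) (2 * h) := by
    have hinner := (hφ.const_add z).sub hbb
    have hne : z + (-2 * (2 * h) * h + Real.sqrt (1 - 4 * h ^ 2 + (2 * h) ^ 2)) / (1 - 4 * h ^ 2)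
        - -(2 * h * (2 * h) + Real.sqrt (1 - 4 * h ^ 2 + (2 * h) ^ 2)) / (1 - 4 * h ^ 2) ≠ 0 := by
      rw [hval]; positivity
    have := hinner.sqrt hne
    refine this.congr_deriv ?_
    simp only [Pi.sub_apply]
    rw [hval]
    ring
  -- B
  have hB : HasDerivAt
      (fun a : ℝ => Real.sqrt ((z + (-2 * a * h + Real.sqrt (1 - 4 * h ^ 2 + a ^ 2))
        / (1 - 4 * h ^ 2)) ^ 2 - 1)) 0 (2 * h) := by
    have hinner := ((hφ.const_add z).pow 2).sub_const 1
    have hne : (z + (-2 * (2 * h) * h + Real.sqrt (1 - 4 * h ^ 2 + (2 * h) ^ 2))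
        / (1 - 4 * h ^ 2)) ^ 2 - 1 ≠ 0 := by
      rw [hvalB]; nlinarith
    have := hinner.sqrt hne
    refine this.congr_deriv ?_
    simp
  -- N
  have hN : HasDerivAt
      (fun a : ℝ => -a + 2 * h * (z + (-2 * a * h + Real.sqrt (1 - 4 * h ^ 2 + a ^ 2))
        / (1 - 4 * h ^ 2))) (-1) (2 * h) := by
    have := ((hasDerivAt_id (2 * h)).neg).add ((hφ.const_add z).const_mul (2 * h))
    refine this.congr_deriv ?_
    ring
  -- D and quotient
  have hD := (hA.const_mul (Real.sqrt z)).mul hB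
  have hDne : Real.sqrt z * Real.sqrt (z + (-2 * (2 * h) * h +
        Real.sqrt (1 - 4 * h ^ 2 + (2 * h) ^ 2)) / (1 - 4 * h ^ 2)
        - -(2 * h * (2 * h) + Real.sqrt (1 - 4 * h ^ 2 + (2 * h) ^ 2)) / (1 - 4 * h ^ 2))
      * Real.sqrt ((z + (-2 * (2 * h) * h + Real.sqrt (1 - 4 * h ^ 2 + (2 * h) ^ 2))
        / (1 - 4 * h ^ 2)) ^ 2 - 1) ≠ 0 := by
    rw [hval, hvalB]
    have hzz : (0:ℝ) < z ^ 2 + 2 * z := by nlinarith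
    exact mul_ne_zero (mul_ne_zero (ne_of_gt (Real.sqrt_pos.mpr hz))
      (ne_of_gt (Real.sqrt_pos.mpr hApos))) (ne_of_gt (Real.sqrt_pos.mpr hzz))
  have hQ := hN.div hD hDne
  have hfun : (fun a => utilde h a z) = (fun a : ℝ =>
      (-a + 2 * h * (z + (-2 * a * h + Real.sqrt (1 - 4 * h ^ 2 + a ^ 2)) / (1 - 4 * h ^ 2))) /
      (Real.sqrt z * Real.sqrt (z + (-2 * a * h + Real.sqrt (1 - 4 * h ^ 2 + a ^ 2)) / (1 - 4 * h ^ 2)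
        - -(2 * h * a + Real.sqrt (1 - 4 * h ^ 2 + a ^ 2)) / (1 - 4 * h ^ 2))
        * Real.sqrt ((z + (-2 * a * h + Real.sqrt (1 - 4 * h ^ 2 + a ^ 2))
          / (1 - 4 * h ^ 2)) ^ 2 - 1))) := by
    funext a
    simp only [utilde, phi, bb]
  simp only [Pi.div_def, Pi.mul_def] at hQ
  rw [hfun, hQ.deriv]
  rw [hval, hvalB, hNval]
  have e1 : Real.sqrt (z ^ 2 + 2 * z) = Real.sqrt z * Real.sqrt (z + 2) := by
    rw [show z ^ 2 + 2 * z = z * (z + 2) by ring, Real.sqrt_mul hz.le]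
  have e2 : (z + 2 / (1 - 4 * h ^ 2)) ^ ((3 : ℝ) / 2)
      = Real.sqrt (z + 2 / (1 - 4 * h ^ 2)) ^ 3 := by
    rw [Real.sqrt_eq_rpow, ← Real.rpow_natCast (_ ^ (_ : ℝ)) 3, ← Real.rpow_mul hApos.le]
    norm_num
  rw [e1, e2]
  have ha2 : Real.sqrt z ^ 2 = z := Real.sq_sqrt hz.le
  have hb2 : Real.sqrt (z + 2 / (1 - 4 * h ^ 2)) ^ 2 = z + 2 / (1 - 4 * h ^ 2) :=
    Real.sq_sqrt hApos.le
  have hc2 : Real.sqrt (z + 2) ^ 2 = z + 2 := Real.sq_sqrt (by linarith)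
  have ha0 : 0 < Real.sqrt z := Real.sqrt_pos.mpr hz
  have hb0 : 0 < Real.sqrt (z + 2 / (1 - 4 * h ^ 2)) := Real.sqrt_pos.mpr hApos
  have hc0 : 0 < Real.sqrt (z + 2) := Real.sqrt_pos.mpr (by linarith)
  set a := Real.sqrt z
  set b := Real.sqrt (z + 2 / (1 - 4 * h ^ 2))
  set c := Real.sqrt (z + 2)
  have hrel : c ^ 2 = (1 - 4 * h ^ 2) * b ^ 2 + 4 * h ^ 2 * a ^ 2 := by
    rw [ha2, hb2, hc2]; field_simp; ring
  have hk2 : (1 - h ^ 2 * 4) ≠ 0 := by nlinarith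
  field_simp
  linear_combination
    (a * b ^ 2 * c * (1 - 4 * h ^ 2) + 4 * h ^ 2 * a * c * (a ^ 2 + z)) * ha2 +
    (a ^ 3 * c) * hrel

/-- at α = 2h the derivative of α ↦ ũ_α^h(z) equals
−(1/z)·√(z + 2)/((1 − 4h²)·(z + 2/(1 − 4h²))^{3/2}), and this function of z is not
integrable near 0: its integral over (ε, 1) diverges to +∞ as ε → 0⁺. -/
theorem stmt_14 (h : ℝ) (hh : h ∈ Set.Ioo (0 : ℝ) (1 / 2)) :
    (∀ z : ℝ, 0 < z →
      deriv (fun a => utilde h a z) (2 * h) =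
        -(1 / z) * (Real.sqrt (z + 2) /
          ((1 - 4 * h ^ 2) * (z + 2 / (1 - 4 * h ^ 2)) ^ ((3 : ℝ) / 2)))) ∧
    ¬ MeasureTheory.IntegrableOn
        (fun z => 1 / z * (Real.sqrt (z + 2) /
          ((1 - 4 * h ^ 2) * (z + 2 / (1 - 4 * h ^ 2)) ^ ((3 : ℝ) / 2))))
        (Set.Ioo 0 1) ∧
    Filter.Tendsto
      (fun ε => ∫ z in ε..1, 1 / z * (Real.sqrt (z + 2) /
        ((1 - 4 * h ^ 2) * (z + 2 / (1 - 4 * h ^ 2)) ^ ((3 : ℝ) / 2))))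
      (nhdsWithin 0 (Set.Ioi 0)) Filter.atTop := by
  exact ⟨fun z hz => aux_deriv h hh z hz, aux_nonint h hh, aux_tendsto h hh⟩
end
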